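/- arXiv:1412.4157 — 3 statements merged into one kernel-verified Lean document; each statement's English description precedes it below -/
import Mathlib

section
/- Let 0 < α < n. There exist constants c(n,α) > 0 and C(n,α) such that for every nonnegative f ∈ L¹_loc(ℝ^n), every x ∈ ℝ^n, and every t ∈ {0, ±1/3}^n, c(n,α) I_α^{D^t} f(x) ≤ I_α f(x) ≤ C(n,α) sup_{t ∈ {0,±1/3}^n} I_α^{D^t} f(x). -/
open MeasureTheory ENNReal Set Filter
open scoped NNReal

noncomputable section

abbrev Eucl (n : ℕ) := EuclideanSpace ℝ (Fin n)

/-- The half-open cube in `ℝⁿ` with corner `a` and side length `h`. -/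
def cube (n : ℕ) (a : Fin n → ℝ) (h : ℝ) : Set (Eucl n) :=
  {x | ∀ i, a i ≤ x i ∧ x i < a i + h}

/-- Average of an `ℝ≥0∞`-valued function over a set (w.r.t. Lebesgue measure). -/
def lavg {n : ℕ} (Q : Set (Eucl n)) (g : Eucl n → ℝ≥0∞) : ℝ≥0∞ :=
  (∫⁻ x in Q, g x) / volume Q

/-- `u(E) = ∫_E u dx` for a weight `u`. -/
def setW {n : ℕ} (u : Eucl n → ℝ) (s : Set (Eucl n)) : ℝ≥0∞ :=
  ∫⁻ x in s, ENNReal.ofReal (u x)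

/-- A weight: nonnegative, measurable, positive on a set of positive measure. -/
def Weight {n : ℕ} (u : Eucl n → ℝ) : Prop :=
  Measurable u ∧ (∀ x, 0 ≤ u x) ∧ 0 < volume {x | 0 < u x}

/-- The fractional maximal operator `M_α`. -/
def maxFn (n : ℕ) (α : ℝ) (f : Eucl n → ℝ) (x : Eucl n) : ℝ≥0∞ :=
  ⨆ (a : Fin n → ℝ) (h : ℝ) (_ : 0 < h) (_ : x ∈ cube n a h),
    volume (cube n a h) ^ (α / (n:ℝ)) * lavg (cube n a h) (fun y => ENNReal.ofReal |f y|)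

/-- The fractional maximal operator restricted to a family of cubes. -/
def maxFnGrid (n : ℕ) (α : ℝ) (D : Set (Set (Eucl n))) (f : Eucl n → ℝ) (x : Eucl n) : ℝ≥0∞ :=
  ⨆ (Q : Set (Eucl n)) (_ : Q ∈ D) (_ : x ∈ Q),
    volume Q ^ (α / (n:ℝ)) * lavg Q (fun y => ENNReal.ofReal |f y|)

/-- The fractional integral `I_α`, as a positive (`ℝ≥0∞`-valued) operator. -/
def fracIntE (n : ℕ) (α : ℝ) (f : Eucl n → ℝ) (x : Eucl n) : ℝ≥0∞ :=
  ∫⁻ y, ENNReal.ofReal (f y) * ENNReal.ofReal (‖x - y‖ ^ (α - (n:ℝ)))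

/-- The dyadic fractional integral associated to a family of cubes. -/
def fracIntGrid (n : ℕ) (α : ℝ) (D : Set (Set (Eucl n))) (f : Eucl n → ℝ) (x : Eucl n) : ℝ≥0∞ :=
  ∑' Q : D, Set.indicator (Q : Set (Eucl n))
    (fun _ => volume (Q : Set (Eucl n)) ^ (α / (n:ℝ)) *
      lavg (Q : Set (Eucl n)) (fun y => ENNReal.ofReal (f y))) x

/-- The standard dyadic grid `Δ`. -/
def stdGrid (n : ℕ) : Set (Set (Eucl n)) :=
  {Q | ∃ (k : ℤ) (m : Fin n → ℤ), Q = cube n (fun i => (2:ℝ) ^ k * (m i : ℝ)) ((2:ℝ) ^ k)}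

/-- The translated dyadic grids `𝒟^t`. -/
def transGrid (n : ℕ) (t : Fin n → ℝ) : Set (Set (Eucl n)) :=
  {Q | ∃ (j : ℤ) (m : Fin n → ℤ), Q = cube n (fun i => (2:ℝ) ^ j * ((m i : ℝ) + t i)) ((2:ℝ) ^ j)}

def thirds : Set ℝ := {0, 1/3, -1/3}

/-- A collection of cubes is a dyadic grid. -/
def IsDyadicGrid (n : ℕ) (D : Set (Set (Eucl n))) : Prop :=
  (∀ Q ∈ D, ∃ (a : Fin n → ℝ) (k : ℤ), Q = cube n a ((2:ℝ) ^ k)) ∧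
  (∀ P ∈ D, ∀ Q ∈ D, P ∩ Q = P ∨ P ∩ Q = Q ∨ P ∩ Q = ∅) ∧
  (∀ (k : ℤ) (x : Eucl n), ∃! Q, Q ∈ D ∧ (∃ a, Q = cube n a ((2:ℝ) ^ k)) ∧ x ∈ Q)

/-- The set `E(Q) = Q \ ⋃ {P ∈ S : P ⊊ Q}`. -/
def sparseE {n : ℕ} (S : Set (Set (Eucl n))) (Q : Set (Eucl n)) : Set (Eucl n) :=
  Q \ ⋃ P ∈ {P | P ∈ S ∧ P ⊂ Q}, P

/-- A sparse family of cubes. -/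
def IsSparse {n : ℕ} (S : Set (Set (Eucl n))) : Prop :=
  ∀ Q ∈ S, volume Q ≤ 2 * volume (sparseE S Q)

/-- The sparse linearized maximal operator `L_α^S`. -/
def sparseL (n : ℕ) (α : ℝ) (S : Set (Set (Eucl n))) (f : Eucl n → ℝ) (x : Eucl n) : ℝ≥0∞ :=
  ∑' Q : S, Set.indicator (sparseE S (Q : Set (Eucl n)))
    (fun _ => volume (Q : Set (Eucl n)) ^ (α / (n:ℝ)) *
      lavg (Q : Set (Eucl n)) (fun y => ENNReal.ofReal (f y))) x

/-- The Calderón–Zygmund cubes: the maximal cubes `Q ∈ Δ` with `⟨|f|⟩_Q > λ`. -/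
def czCubes (n : ℕ) (f : Eucl n → ℝ) (lam : ℝ) : Set (Set (Eucl n)) :=
  {Q | Q ∈ stdGrid n ∧ ENNReal.ofReal lam < lavg Q (fun y => ENNReal.ofReal |f y|) ∧
    ∀ P ∈ stdGrid n, Q ⊆ P →
      ENNReal.ofReal lam < lavg P (fun y => ENNReal.ofReal |f y|) → P = Q}

/-- The one-weight `A_{p,q}` constant, `1 < p`. -/
def apqConst (n : ℕ) (p q : ℝ) (w : Eucl n → ℝ) : ℝ≥0∞ :=
  ⨆ (a : Fin n → ℝ) (h : ℝ) (_ : 0 < h),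
    (lavg (cube n a h) (fun x => ENNReal.ofReal (w x ^ q))) ^ (1/q) *
    (lavg (cube n a h) (fun x => ENNReal.ofReal (w x ^ (-(p/(p-1)))))) ^ (1 - 1/p)

/-- The one-weight `A_{1,q}` constant. -/
def a1qConst (n : ℕ) (q : ℝ) (w : Eucl n → ℝ) : ℝ≥0∞ :=
  ⨆ (a : Fin n → ℝ) (h : ℝ) (_ : 0 < h),
    (lavg (cube n a h) (fun x => ENNReal.ofReal (w x ^ q))) ^ (1/q) *
    essSup (fun x => ENNReal.ofReal (w x)⁻¹) (volume.restrict (cube n a h))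

/-- The two-weight `A_{p,q}^α` constant. -/
def apqAlpha (n : ℕ) (α p q : ℝ) (u σ : Eucl n → ℝ) : ℝ≥0∞ :=
  ⨆ (a : Fin n → ℝ) (h : ℝ) (_ : 0 < h),
    volume (cube n a h) ^ (α / (n:ℝ) + 1/q - 1/p) *
    ((lavg (cube n a h) (fun x => ENNReal.ofReal (u x))) ^ (1/q) *
     (lavg (cube n a h) (fun x => ENNReal.ofReal (σ x))) ^ (1 - 1/p))

/-- Sawyer testing constant for the fractional maximal operator. -/
def maxTestConst (n : ℕ) (α p q : ℝ) (u σ : Eucl n → ℝ) : ℝ≥0∞ :=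
  ⨆ (a : Fin n → ℝ) (h : ℝ) (_ : 0 < h) (_ : 0 < setW σ (cube n a h)),
    setW σ (cube n a h) ^ (-(1/p)) *
    (∫⁻ x in cube n a h,
      (maxFn n α ((cube n a h).indicator σ) x) ^ q * ENNReal.ofReal (u x)) ^ (1/q)

/-- Sawyer testing constant for the fractional integral operator. -/
def fracTestConst (n : ℕ) (α p q : ℝ) (u σ : Eucl n → ℝ) : ℝ≥0∞ :=
  ⨆ (a : Fin n → ℝ) (h : ℝ) (_ : 0 < h) (_ : 0 < setW σ (cube n a h)),
    setW σ (cube n a h) ^ (-(1/p)) *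
    (∫⁻ x in cube n a h,
      (fracIntE n α ((cube n a h).indicator σ) x) ^ q * ENNReal.ofReal (u x)) ^ (1/q)

/-- The BMO seminorm. -/
def bmoNorm (n : ℕ) (b : Eucl n → ℝ) : ℝ≥0∞ :=
  ⨆ (a : Fin n → ℝ) (h : ℝ) (_ : 0 < h),
    lavg (cube n a h) (fun x => ENNReal.ofReal |b x - ⨍ y in cube n a h, b y|)

/-- The commutator `[b, I_α] f`. -/
def commFrac (n : ℕ) (α : ℝ) (b f : Eucl n → ℝ) (x : Eucl n) : ℝ :=
  ∫ y, (b x - b y) * f y * ‖x - y‖ ^ (α - (n:ℝ))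

/-- The dyadic commutator-type operator `C_b^D`. -/
def commGrid (n : ℕ) (α : ℝ) (D : Set (Set (Eucl n))) (b f : Eucl n → ℝ) (x : Eucl n) : ℝ≥0∞ :=
  ∑' Q : D, Set.indicator (Q : Set (Eucl n))
    (fun _ => volume (Q : Set (Eucl n)) ^ (α / (n:ℝ)) *
      lavg (Q : Set (Eucl n)) (fun y => ENNReal.ofReal (|b x - b y| * f y))) x

/-- Young functions. -/
def IsYoung (B : ℝ → ℝ) : Prop :=
  ContinuousOn B (Ici 0) ∧ ConvexOn ℝ (Ici 0) B ∧ StrictMonoOn B (Ici 0) ∧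
  B 0 = 0 ∧ Tendsto (fun t => B t / t) atTop atTop

/-- The associate Young function `B̄(t) = sup_{s>0} (st − B(s))`. -/
def youngConj (B : ℝ → ℝ) (t : ℝ) : ℝ :=
  sSup ((fun s => s * t - B s) '' Ioi 0)

/-- The `B_p` condition: `∫_1^∞ B(t)/t^p dt/t < ∞`. -/
def IsBp (B : ℝ → ℝ) (p : ℝ) : Prop :=
  IntegrableOn (fun t => B t / t ^ (p + 1)) (Ioi 1)

/-- The normalized Luxemburg norm of `f` on the cube `Q`. -/
def luxNorm {n : ℕ} (B : ℝ → ℝ) (Q : Set (Eucl n)) (f : Eucl n → ℝ) : ℝ :=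
  sInf {lam : ℝ | 0 < lam ∧ (⨍ x in Q, B (|f x| / lam)) ≤ 1}

/-- The separated bump constant `[u,σ]_{A_{p,q,B}^α}` (bump on the right). -/
def bumpRight (n : ℕ) (α p q : ℝ) (B : ℝ → ℝ) (u σ : Eucl n → ℝ) : ℝ≥0∞ :=
  ⨆ (a : Fin n → ℝ) (h : ℝ) (_ : 0 < h),
    volume (cube n a h) ^ (α / (n:ℝ) + 1/q - 1/p) *
    ((lavg (cube n a h) (fun x => ENNReal.ofReal (u x))) ^ (1/q) *
     ENNReal.ofReal (luxNorm B (cube n a h) (fun x => σ x ^ ((p-1)/p))))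

/-- The conjoined bump constant `[u,σ]_{A_{p,q,A,B}^α}`. -/
def bumpBoth (n : ℕ) (α p q : ℝ) (A B : ℝ → ℝ) (u σ : Eucl n → ℝ) : ℝ≥0∞ :=
  ⨆ (a : Fin n → ℝ) (h : ℝ) (_ : 0 < h),
    volume (cube n a h) ^ (α / (n:ℝ) + 1/q - 1/p) *
    (ENNReal.ofReal (luxNorm A (cube n a h) (fun x => u x ^ (1/q))) *
     ENNReal.ofReal (luxNorm B (cube n a h) (fun x => σ x ^ ((p-1)/p))))

/-- Strong operator norm of `I_α(·σ) : L^p(σ) → L^q(u)`. -/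
def strongNormI (n : ℕ) (α p q : ℝ) (u σ : Eucl n → ℝ) : ℝ≥0∞ :=
  ⨆ (f : Eucl n → ℝ) (_ : Measurable f)
    (_ : (∫⁻ x, ENNReal.ofReal |f x| ^ p * ENNReal.ofReal (σ x)) ≤ 1),
    (∫⁻ x, (fracIntE n α (fun y => |f y| * σ y) x) ^ q * ENNReal.ofReal (u x)) ^ (1/q)

/-- Weak operator norm of `I_α(·σ) : L^p(σ) → L^{q,∞}(u)`. -/
def weakNormI (n : ℕ) (α p q : ℝ) (u σ : Eucl n → ℝ) : ℝ≥0∞ :=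
  ⨆ (f : Eucl n → ℝ) (_ : Measurable f)
    (_ : (∫⁻ x, ENNReal.ofReal |f x| ^ p * ENNReal.ofReal (σ x)) ≤ 1)
    (t : ℝ) (_ : 0 < t),
    ENNReal.ofReal t *
      (setW u {x | ENNReal.ofReal t < fracIntE n α (fun y => |f y| * σ y) x}) ^ (1/q)

end

namespace Statement3Aux
open MeasureTheory ENNReal Set Filter Function
noncomputable section
variable {n : ℕ}


lemma cube_eq_preimage (a : Fin n → ℝ) (h : ℝ) :
    cube n a h = (MeasurableEquiv.toLp 2 (Fin n → ℝ)).symm ⁻¹'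
      (Set.univ.pi fun i => Ico (a i) (a i + h)) := by
  ext x
  simp [cube, MeasurableEquiv.toLp, Set.mem_pi, Ico, and_comm]
  exact Iff.rfl

lemma measurableSet_cube {a : Fin n → ℝ} {h : ℝ} : MeasurableSet (cube n a h) := by
  rw [cube_eq_preimage]
  exact (MeasurableEquiv.toLp 2 (Fin n → ℝ)).symm.measurable
    (MeasurableSet.univ_pi fun i => measurableSet_Ico)

lemma volume_cube (a : Fin n → ℝ) {h : ℝ} (hh : 0 ≤ h) :
    volume (cube n a h) = ENNReal.ofReal (h ^ n) := by
  rw [cube_eq_preimage,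
    (EuclideanSpace.volume_preserving_symm_measurableEquiv_toLp (Fin n)).measure_preimage
      ((MeasurableSet.univ_pi fun i => measurableSet_Ico).nullMeasurableSet),
    volume_pi_pi]
  simp [Real.volume_Ico, ENNReal.ofReal_pow hh]

lemma volume_singleton' (hn : 0 < n) (x : Eucl n) : volume ({x} : Set (Eucl n)) = 0 := by
  refine le_antisymm ?_ zero_le
  refine ENNReal.le_of_forall_pos_le_add (fun ε hε _ => ?_)
  rw [zero_add]
  set h : ℝ := min (ε:ℝ) 1 with hh
  have hh0 : 0 < h := lt_min (by exact_mod_cast hε) one_pos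
  have hsub : ({x} : Set (Eucl n)) ⊆ cube n (fun i => x i) h := by
    intro y hy
    rw [Set.mem_singleton_iff] at hy
    subst hy
    intro i
    exact ⟨le_refl _, by linarith⟩
  calc volume ({x} : Set (Eucl n)) ≤ volume (cube n (fun i => x i) h) := measure_mono hsub
    _ = ENNReal.ofReal (h ^ n) := volume_cube _ hh0.le
    _ ≤ ENNReal.ofReal h := ENNReal.ofReal_le_ofReal
        (pow_le_of_le_one hh0.le (min_le_right _ _) hn.ne')
    _ ≤ ENNReal.ofReal (ε:ℝ) := ENNReal.ofReal_le_ofReal (min_le_left _ _)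
    _ = ε := ENNReal.ofReal_coe_nnreal

lemma coord_abs_le_norm (z : Eucl n) (i : Fin n) : |z i| ≤ ‖z‖ := by
  rw [EuclideanSpace.norm_eq]
  calc |z i| = Real.sqrt (‖z i‖ ^ 2) := by
        rw [Real.sqrt_sq_eq_abs, Real.norm_eq_abs, abs_abs]
    _ ≤ _ := Real.sqrt_le_sqrt (Finset.single_le_sum
        (f := fun i => ‖z i‖ ^ 2) (fun _ _ => sq_nonneg _) (Finset.mem_univ i))

lemma norm_le_of_mem_cube {a : Fin n → ℝ} {h : ℝ} {x y : Eucl n}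
    (hh : 0 ≤ h) (hx : x ∈ cube n a h) (hy : y ∈ cube n a h) : ‖x - y‖ ≤ Real.sqrt n * h := by
  rw [EuclideanSpace.norm_eq]
  have key : ∑ i, ‖(x - y) i‖ ^ 2 ≤ (n : ℝ) * h ^ 2 := by
    have : ∀ i : Fin n, ‖(x - y) i‖ ^ 2 ≤ h ^ 2 := by
      intro i
      have h1 := hx i; have h2 := hy i
      have : |x i - y i| ≤ h := abs_le.2 ⟨by linarith [h1.1, h2.2], by linarith [h1.2, h2.1]⟩
      calc ‖(x - y) i‖ ^ 2 = |x i - y i| ^ 2 := by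
            rw [PiLp.sub_apply, Real.norm_eq_abs]
        _ ≤ h ^ 2 := by nlinarith [abs_nonneg (x i - y i)]
    calc ∑ i, ‖(x - y) i‖ ^ 2 ≤ ∑ _i : Fin n, h ^ 2 := Finset.sum_le_sum fun i _ => this i
      _ = (n : ℝ) * h ^ 2 := by simp [mul_comm]
  calc Real.sqrt (∑ i, ‖(x - y) i‖ ^ 2) ≤ Real.sqrt ((n : ℝ) * h ^ 2) := Real.sqrt_le_sqrt key
    _ = Real.sqrt n * h := by
        rw [Real.sqrt_mul (Nat.cast_nonneg n), Real.sqrt_sq hh]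

def gridCube (n : ℕ) (t : Fin n → ℝ) (j : ℤ) (x : Eucl n) : Set (Eucl n) :=
  cube n (fun i => (2:ℝ) ^ j * ((⌊x i / (2:ℝ) ^ j - t i⌋ : ℝ) + t i)) ((2:ℝ) ^ j)

lemma gridCube_mem_transGrid (t : Fin n → ℝ) (j : ℤ) (x : Eucl n) :
    gridCube n t j x ∈ transGrid n t :=
  ⟨j, fun i => ⌊x i / (2:ℝ) ^ j - t i⌋, rfl⟩

lemma mem_gridCube (t : Fin n → ℝ) (j : ℤ) (x : Eucl n) : x ∈ gridCube n t j x := by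
  intro i
  have hp : (0:ℝ) < (2:ℝ) ^ j := zpow_pos two_pos j
  set w := x i / (2:ℝ) ^ j - t i with hw
  have h1 : (⌊w⌋ : ℝ) ≤ w := Int.floor_le w
  have h2 : w < ⌊w⌋ + 1 := Int.lt_floor_add_one w
  have hxi : (2:ℝ) ^ j * w = x i - (2:ℝ) ^ j * t i := by
    rw [hw]; field_simp
  have m1 : (2:ℝ) ^ j * (⌊w⌋:ℝ) ≤ (2:ℝ) ^ j * w := by nlinarith
  have m2 : (2:ℝ) ^ j * w < (2:ℝ) ^ j * ((⌊w⌋:ℝ) + 1) := by nlinarith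
  dsimp only [gridCube, cube, Set.mem_setOf_eq]
  constructor <;> nlinarith

lemma mem_cube_coord {j : ℤ} {x : Eucl n} {m : Fin n → ℤ} {t : Fin n → ℝ}
    (hx : x ∈ cube n (fun i => (2:ℝ) ^ j * ((m i : ℝ) + t i)) ((2:ℝ) ^ j)) (i : Fin n) :
    m i = ⌊x i / (2:ℝ) ^ j - t i⌋ := by
  have hp : (0:ℝ) < (2:ℝ) ^ j := zpow_pos two_pos j
  have h1 := (hx i).1
  have h2 := (hx i).2
  dsimp only at h1 h2
  symm
  rw [Int.floor_eq_iff]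
  have e1 : ((m i : ℝ) + t i) * (2:ℝ)^j ≤ (x i / (2:ℝ)^j) * (2:ℝ)^j := by
    rw [div_mul_cancel₀ _ hp.ne']; nlinarith
  have e2 : (x i / (2:ℝ)^j) * (2:ℝ)^j < ((m i : ℝ) + t i + 1) * (2:ℝ)^j := by
    rw [div_mul_cancel₀ _ hp.ne']; nlinarith
  have e1' := le_of_mul_le_mul_right e1 hp
  have e2' := lt_of_mul_lt_mul_right e2 hp.le
  constructor
  · linarith
  · linarith

lemma eq_gridCube {t : Fin n → ℝ} {Q : Set (Eucl n)} (hQ : Q ∈ transGrid n t)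
    {x : Eucl n} (hx : x ∈ Q) : ∃ j : ℤ, Q = gridCube n t j x := by
  obtain ⟨j, m, rfl⟩ := hQ
  refine ⟨j, ?_⟩
  have hfun : (fun i => (2:ℝ) ^ j * ((m i : ℝ) + t i))
      = fun i => (2:ℝ) ^ j * ((⌊x i / (2:ℝ) ^ j - t i⌋ : ℝ) + t i) := by
    funext i; rw [← mem_cube_coord hx]
  rw [gridCube, ← hfun]

lemma gridCube_inj (hn : 0 < n) (t : Fin n → ℝ) (x : Eucl n) :
    Injective fun j => gridCube n t j x := by
  intro j j' hjj
  have hv := congrArg volume hjj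
  simp only [gridCube] at hv
  rw [volume_cube _ (zpow_pos two_pos j).le, volume_cube _ (zpow_pos two_pos j').le,
    ENNReal.ofReal_eq_ofReal_iff (by positivity) (by positivity)] at hv
  have : ((2:ℝ) ^ j) ^ (n:ℤ) = ((2:ℝ) ^ j') ^ (n:ℤ) := by push_cast [zpow_natCast]; exact_mod_cast hv
  rw [← zpow_mul, ← zpow_mul] at this
  have hinj := zpow_right_injective₀ (by norm_num : (0:ℝ) < 2) (by norm_num : (2:ℝ) ≠ 1) this
  have hn' : (n:ℤ) ≠ 0 := by exact_mod_cast hn.ne'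
  exact mul_right_cancel₀ hn' hinj

lemma measurableSet_gridCube {t : Fin n → ℝ} {j : ℤ} {x : Eucl n} :
    MeasurableSet (gridCube n t j x) := measurableSet_cube

lemma grid_term (hn : 0 < n) (α : ℝ) (a : Fin n → ℝ) {h : ℝ} (hh : 0 < h)
    (g : Eucl n → ℝ≥0∞) :
    volume (cube n a h) ^ (α / (n:ℝ)) * lavg (cube n a h) g
      = ENNReal.ofReal (h ^ (α - (n:ℝ))) * ∫⁻ y in cube n a h, g y := by
  have hn' : (0:ℝ) < n := by exact_mod_cast hn
  have hrp : (0:ℝ) < h ^ (n:ℝ) := Real.rpow_pos_of_pos hh _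
  have hvn : (h : ℝ) ^ n = h ^ ((n:ℝ)) := (Real.rpow_natCast h n).symm
  rw [lavg, volume_cube a hh.le, hvn]
  have e1 : ENNReal.ofReal (h ^ ((n:ℝ))) ^ (α / (n:ℝ)) = ENNReal.ofReal (h ^ α) := by
    rw [ENNReal.ofReal_rpow_of_pos hrp, ← Real.rpow_mul hh.le]
    congr 1
    field_simp
  rw [e1, ENNReal.div_eq_inv_mul, ← ENNReal.ofReal_inv_of_pos hrp, ← mul_assoc,
    ← ENNReal.ofReal_mul (Real.rpow_nonneg hh.le α), ← Real.rpow_neg hh.le,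
    ← Real.rpow_add hh, sub_eq_add_neg]

lemma exists_good_shift (w : ℝ) :
    ∃ s : ℝ, s ∈ thirds ∧ Int.fract (w - s) ∈ Icc (1/6 : ℝ) (5/6) := by
  have hfr : ∀ s : ℝ, Int.fract (w - s) = Int.fract (Int.fract w - s) := by
    intro s
    conv_lhs => rw [← Int.floor_add_fract w]
    rw [add_sub_assoc, Int.fract_intCast_add]
  have h0 : (0:ℝ) ≤ Int.fract w := Int.fract_nonneg w
  have h1 : Int.fract w < 1 := Int.fract_lt_one w
  rcases lt_or_ge (Int.fract w) (1/6) with hlt | hge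
  · refine ⟨-1/3, by simp [thirds], ?_⟩
    rw [show (w - -1/3) = w - (-1/3) by ring, hfr]
    rw [Int.fract_eq_self.2 ⟨by linarith, by linarith⟩]
    constructor <;> linarith
  rcases le_or_gt (Int.fract w) (5/6) with hle | hgt
  · refine ⟨0, by simp [thirds], ?_⟩
    rw [hfr, Int.fract_eq_self.2 ⟨by linarith, by linarith⟩]
    exact ⟨by linarith, by linarith⟩
  · refine ⟨1/3, by simp [thirds], ?_⟩
    rw [hfr, Int.fract_eq_self.2 ⟨by linarith, by linarith⟩]
    constructor <;> linarith

lemma tsum_geom_tail {β : ℝ} (hβ : β < 0) (j0 : ℤ) :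
    (∑' j : ℤ, if j0 ≤ j then ENNReal.ofReal (((2:ℝ) ^ j) ^ β) else 0)
      = ENNReal.ofReal (((2:ℝ) ^ j0) ^ β) * ENNReal.ofReal ((1 - (2:ℝ) ^ β)⁻¹) := by
  have h2β : (0:ℝ) < (2:ℝ) ^ β := Real.rpow_pos_of_pos two_pos β
  have h2β1 : (2:ℝ) ^ β < 1 := Real.rpow_lt_one_of_one_lt_of_neg one_lt_two hβ
  have hterm : ∀ k : ℕ, ((2:ℝ) ^ (j0 + (k:ℤ))) ^ β
      = ((2:ℝ) ^ j0) ^ β * ((2:ℝ) ^ β) ^ k := by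
    intro k
    rw [zpow_add₀ (two_ne_zero), Real.mul_rpow (zpow_pos two_pos j0).le
      (zpow_pos two_pos (k:ℤ)).le, zpow_natCast]
    congr 1
    rw [← Real.rpow_natCast 2 k, ← Real.rpow_mul (by norm_num), mul_comm,
      Real.rpow_mul (by norm_num), Real.rpow_natCast]
  have key : (∑' j : ℤ, if j0 ≤ j then ENNReal.ofReal (((2:ℝ) ^ j) ^ β) else 0)
      = ∑' k : ℕ, ENNReal.ofReal (((2:ℝ) ^ (j0 + (k:ℤ))) ^ β) := by
    refine tsum_eq_tsum_of_ne_zero_bij (g := fun k : ℕ => ENNReal.ofReal (((2:ℝ) ^ (j0 + (k:ℤ))) ^ β))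
        (fun k => j0 + (k.1 : ℤ)) ?_ ?_ ?_
    · intro k k' hk
      exact Subtype.ext (by simpa using hk)
    · rintro j hj
      have hj0 : j0 ≤ j := by by_contra h; simp [h] at hj
      refine ⟨⟨(j - j0).toNat, ?_⟩, ?_⟩
      · simp only [Function.mem_support, ne_eq]
        positivity
      · simp [Int.toNat_of_nonneg (by linarith : (0:ℤ) ≤ j - j0)]
    · intro k
      rw [if_pos (by linarith [Int.ofNat_nonneg k.1] : j0 ≤ j0 + (k.1:ℤ))]
  rw [key]
  calc (∑' k : ℕ, ENNReal.ofReal (((2:ℝ) ^ (j0 + (k:ℤ))) ^ β))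
      = ∑' k : ℕ, ENNReal.ofReal (((2:ℝ) ^ j0) ^ β) * ENNReal.ofReal ((2:ℝ) ^ β) ^ k := by
        congr 1; funext k
        rw [hterm k, ENNReal.ofReal_mul (Real.rpow_nonneg (zpow_pos two_pos j0).le β),
          ENNReal.ofReal_pow h2β.le]
    _ = ENNReal.ofReal (((2:ℝ) ^ j0) ^ β) * (1 - ENNReal.ofReal ((2:ℝ) ^ β))⁻¹ := by
        rw [ENNReal.tsum_mul_left, ENNReal.tsum_geometric]
    _ = _ := by
        congr 1
        rw [← ENNReal.ofReal_one, ← ENNReal.ofReal_sub _ h2β.le,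
          ENNReal.ofReal_inv_of_pos (by linarith)]

lemma fracIntGrid_eq (hn : 0 < n) (α : ℝ) (t : Fin n → ℝ) (f : Eucl n → ℝ) (x : Eucl n) :
    fracIntGrid n α (transGrid n t) f x
      = ∑' j : ℤ, ENNReal.ofReal (((2:ℝ) ^ j) ^ (α - (n:ℝ)))
          * ∫⁻ y in gridCube n t j x, ENNReal.ofReal (f y) := by
  have hterm : ∀ j : ℤ,
      volume (gridCube n t j x) ^ (α / (n:ℝ)) *
        lavg (gridCube n t j x) (fun y => ENNReal.ofReal (f y))
      = ENNReal.ofReal (((2:ℝ) ^ j) ^ (α - (n:ℝ)))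
          * ∫⁻ y in gridCube n t j x, ENNReal.ofReal (f y) := fun j =>
    grid_term hn α _ (zpow_pos two_pos j) _
  rw [fracIntGrid]
  refine tsum_eq_tsum_of_ne_zero_bij
    (g := fun j : ℤ => ENNReal.ofReal (((2:ℝ) ^ j) ^ (α - (n:ℝ)))
      * ∫⁻ y in gridCube n t j x, ENNReal.ofReal (f y))
    (fun j => ⟨gridCube n t j.1 x, gridCube_mem_transGrid t j.1 x⟩) ?_ ?_ ?_
  · intro j j' hjj
    exact Subtype.ext (gridCube_inj hn t x (by simpa using hjj))
  · rintro ⟨Q, hQ⟩ hne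
    simp only [Function.mem_support, ne_eq] at hne
    have hx : x ∈ Q := by
      by_contra hx
      exact hne (Set.indicator_of_notMem hx _)
    obtain ⟨j, rfl⟩ := eq_gridCube hQ hx
    refine ⟨⟨j, ?_⟩, rfl⟩
    simp only [Function.mem_support, ne_eq]
    rw [← hterm j]
    intro h0
    apply hne
    rw [Set.indicator_of_mem hx]
    exact h0
  · intro j
    rw [Set.indicator_of_mem (mem_gridCube t j.1 x), hterm j.1]

lemma lower_bound (hn : 0 < n) {α : ℝ} (hα0 : 0 < α) (hαn : α < n)
    (f : Eucl n → ℝ) (hf : AEMeasurable f volume) (x : Eucl n) (t : Fin n → ℝ) :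
    ENNReal.ofReal ((Real.sqrt n ^ ((n:ℝ) - α) * (1 - (2:ℝ) ^ (α - (n:ℝ)))⁻¹)⁻¹) *
      fracIntGrid n α (transGrid n t) f x ≤ fracIntE n α f x := by
  have hn' : (0:ℝ) < n := by exact_mod_cast hn
  set β := α - (n:ℝ) with hβdef
  have hβ : β < 0 := by simp [hβdef]; linarith
  have h2β : (0:ℝ) < (2:ℝ) ^ β := Real.rpow_pos_of_pos two_pos β
  have h2β1 : (2:ℝ) ^ β < 1 := Real.rpow_lt_one_of_one_lt_of_neg one_lt_two hβ
  have hsq : (0:ℝ) < Real.sqrt n := Real.sqrt_pos.2 hn'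
  set K := Real.sqrt n ^ ((n:ℝ) - α) * (1 - (2:ℝ) ^ β)⁻¹ with hKdef
  have hKpos : 0 < K := by
    apply mul_pos (Real.rpow_pos_of_pos hsq _)
    rw [inv_pos]; linarith
  set c := ENNReal.ofReal K⁻¹ with hcdef
  have hmeasf : AEMeasurable (fun y => ENNReal.ofReal (f y)) volume :=
    ENNReal.measurable_ofReal.comp_aemeasurable hf
  rw [fracIntGrid_eq hn α t f x]
  have hterm : ∀ j : ℤ,
      ENNReal.ofReal (((2:ℝ) ^ j) ^ β) * ∫⁻ y in gridCube n t j x, ENNReal.ofReal (f y)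
      = ∫⁻ y, (gridCube n t j x).indicator
          (fun y => ENNReal.ofReal (((2:ℝ) ^ j) ^ β) * ENNReal.ofReal (f y)) y := by
    intro j
    rw [lintegral_indicator measurableSet_gridCube, lintegral_const_mul' _ _ ENNReal.ofReal_ne_top]
  rw [tsum_congr hterm, ← lintegral_tsum
    (fun j => ((hmeasf.const_mul _).indicator measurableSet_gridCube)),
    ← lintegral_const_mul' _ _ ENNReal.ofReal_ne_top]
  rw [fracIntE]
  apply lintegral_mono_ae
  have hae : ∀ᵐ y : Eucl n, y ≠ x := by
    rw [ae_iff]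
    simpa using volume_singleton' hn x
  filter_upwards [hae] with y hy
  set r := ‖x - y‖ with hrdef
  have hr : 0 < r := by
    rw [hrdef, norm_pos_iff]
    exact sub_ne_zero.mpr (Ne.symm hy)
  set j0 : ℤ := ⌈Real.logb 2 (r / Real.sqrt n)⌉ with hj0def
  have hsum : (∑' j : ℤ, (gridCube n t j x).indicator
        (fun y => ENNReal.ofReal (((2:ℝ) ^ j) ^ β) * ENNReal.ofReal (f y)) y)
      ≤ (∑' j : ℤ, if j0 ≤ j then ENNReal.ofReal (((2:ℝ) ^ j) ^ β) else 0)
          * ENNReal.ofReal (f y) := by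
    rw [← ENNReal.tsum_mul_right]
    refine Summable.tsum_le_tsum (fun j => ?_) ENNReal.summable ENNReal.summable
    by_cases hyQ : y ∈ gridCube n t j x
    · rw [Set.indicator_of_mem hyQ]
      have hj : j0 ≤ j := by
        have hrle : r ≤ Real.sqrt n * 2 ^ j :=
          norm_le_of_mem_cube (zpow_pos two_pos j).le (mem_gridCube t j x) hyQ
        have hdiv : r / Real.sqrt n ≤ 2 ^ j := by
          rw [div_le_iff₀ hsq, mul_comm]; exact hrle
        have hlog : Real.logb 2 (r / Real.sqrt n) ≤ j := by
          calc Real.logb 2 (r / Real.sqrt n) ≤ Real.logb 2 ((2:ℝ) ^ j) :=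
                Real.logb_le_logb_of_le (by norm_num : (1:ℝ) < 2) (by positivity) hdiv
            _ = j := by
                rw [show ((2:ℝ) ^ j) = (2:ℝ) ^ (j:ℝ) from (Real.rpow_intCast 2 j).symm,
                  Real.logb_rpow two_pos (by norm_num : (2:ℝ) ≠ 1)]
        exact Int.ceil_le.2 hlog
      rw [if_pos hj]
    · rw [Set.indicator_of_notMem hyQ]; exact zero_le
  calc c * ∑' j : ℤ, (gridCube n t j x).indicator
        (fun y => ENNReal.ofReal (((2:ℝ) ^ j) ^ β) * ENNReal.ofReal (f y)) y
      ≤ c * ((∑' j : ℤ, if j0 ≤ j then ENNReal.ofReal (((2:ℝ) ^ j) ^ β) else 0)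
          * ENNReal.ofReal (f y)) := mul_le_mul_right hsum c
    _ = c * (ENNReal.ofReal (((2:ℝ) ^ j0) ^ β) * ENNReal.ofReal ((1 - (2:ℝ) ^ β)⁻¹)
          * ENNReal.ofReal (f y)) := by rw [tsum_geom_tail hβ j0]
    _ ≤ c * (ENNReal.ofReal ((r / Real.sqrt n) ^ β) * ENNReal.ofReal ((1 - (2:ℝ) ^ β)⁻¹)
          * ENNReal.ofReal (f y)) := by
        have hA : ENNReal.ofReal (((2:ℝ) ^ j0) ^ β)
            ≤ ENNReal.ofReal ((r / Real.sqrt n) ^ β) := by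
          apply ENNReal.ofReal_le_ofReal
          apply Real.rpow_le_rpow_of_nonpos (by positivity) ?_ hβ.le
          calc r / Real.sqrt n = (2:ℝ) ^ (Real.logb 2 (r / Real.sqrt n)) :=
                (Real.rpow_logb two_pos (by norm_num) (by positivity)).symm
            _ ≤ (2:ℝ) ^ ((j0:ℝ)) :=
                Real.rpow_le_rpow_of_exponent_le (by norm_num) (Int.le_ceil _)
            _ = (2:ℝ) ^ j0 := Real.rpow_intCast 2 j0
        exact mul_le_mul_right (mul_le_mul_left (mul_le_mul_left hA _) _) c
    _ = c * (ENNReal.ofReal ((r / Real.sqrt n) ^ β) * ENNReal.ofReal ((1 - (2:ℝ) ^ β)⁻¹))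
          * ENNReal.ofReal (f y) := by ring
    _ = ENNReal.ofReal (f y) * ENNReal.ofReal (r ^ β) := by
        rw [hcdef, ← ENNReal.ofReal_mul (by positivity), ← ENNReal.ofReal_mul (by positivity),
          mul_comm]
        congr 1
        rw [Real.div_rpow hr.le hsq.le]
        have hκ : Real.sqrt (n:ℝ) ^ ((n:ℝ) - α) = (Real.sqrt (n:ℝ) ^ β)⁻¹ := by
          rw [show ((n:ℝ) - α) = -β by rw [hβdef]; ring, Real.rpow_neg hsq.le]
        rw [hKdef, hκ]
        have h1 : Real.sqrt (n:ℝ) ^ β ≠ 0 := ne_of_gt (Real.rpow_pos_of_pos hsq β)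
        have h2 : (1 - (2:ℝ) ^ β) ≠ 0 := by linarith
        field_simp

lemma exists_good_t (x : Eucl n) (j : ℤ) : ∃ t : Fin n → ℝ, (∀ i, t i ∈ thirds) ∧
    ∀ i, Int.fract (x i / (2:ℝ) ^ j - t i) ∈ Icc (1/6 : ℝ) (5/6) := by
  choose t ht1 ht2 using fun i => exists_good_shift (x i / (2:ℝ) ^ j)
  exact ⟨t, ht1, ht2⟩

lemma mem_gridCube_of_close {t : Fin n → ℝ} {j : ℤ} {x y : Eucl n}
    (hfr : ∀ i, Int.fract (x i / (2:ℝ) ^ j - t i) ∈ Icc (1/6 : ℝ) (5/6))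
    (hy : ‖y - x‖ < (2:ℝ) ^ j / 6) : y ∈ gridCube n t j x := by
  intro i
  have hp : (0:ℝ) < (2:ℝ) ^ j := zpow_pos two_pos j
  set w := x i / (2:ℝ) ^ j - t i with hw
  have key : x i - (2:ℝ) ^ j * ((⌊w⌋ : ℝ) + t i) = (2:ℝ) ^ j * Int.fract w := by
    rw [Int.fract, hw]
    field_simp
    ring
  have hco : |y i - x i| ≤ ‖y - x‖ := by
    have := coord_abs_le_norm (y - x) i
    rwa [PiLp.sub_apply] at this
  have h16 := (hfr i).1
  have h56 := (hfr i).2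
  rw [← hw] at h16 h56
  have habs := abs_le.1 hco
  have m1 : (2:ℝ) ^ j * (1/6) ≤ (2:ℝ) ^ j * Int.fract w :=
    mul_le_mul_of_nonneg_left h16 hp.le
  have m2 : (2:ℝ) ^ j * Int.fract w ≤ (2:ℝ) ^ j * (5/6) :=
    mul_le_mul_of_nonneg_left h56 hp.le
  constructor
  · nlinarith [habs.1, habs.2]
  · nlinarith [habs.1, habs.2]

lemma upper_bound (hn : 0 < n) {α : ℝ} (hα0 : 0 < α) (hαn : α < (n:ℝ))
    (f : Eucl n → ℝ) (hf : AEMeasurable f volume) (x : Eucl n) :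
    fracIntE n α f x ≤ ENNReal.ofReal ((((2:ℝ) ^ (-4:ℤ)) ^ (α - (n:ℝ))) * 3 ^ n) *
      ⨆ (s : Fin n → ℝ) (_ : ∀ i, s i ∈ thirds), fracIntGrid n α (transGrid n s) f x := by
  have hβ : α - (n:ℝ) < 0 := by linarith
  set S := ⨆ (s : Fin n → ℝ) (_ : ∀ i, s i ∈ thirds), fracIntGrid n α (transGrid n s) f x
    with hS
  set Cst := (((2:ℝ) ^ (-4:ℤ)) ^ (α - (n:ℝ))) with hCst
  have hCstpos : 0 < Cst := Real.rpow_pos_of_pos (by positivity) _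
  set T : Finset (Fin n → ℝ) := Fintype.piFinset (fun _ => ({0, 1/3, -1/3} : Finset ℝ))
    with hT
  set g : (Fin n → ℝ) → ℤ → ℝ≥0∞ := fun t j =>
    ENNReal.ofReal (((2:ℝ) ^ j) ^ (α - (n:ℝ)))
      * ∫⁻ y in gridCube n t j x, ENNReal.ofReal (f y) with hg
  have hmemT : ∀ t : Fin n → ℝ, (∀ i, t i ∈ thirds) → t ∈ T := by
    intro t ht
    rw [hT, Fintype.mem_piFinset]
    intro i
    have := ht i
    simp only [thirds, Set.mem_insert_iff, Set.mem_singleton_iff] at this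
    simp only [Finset.mem_insert, Finset.mem_singleton]
    rcases this with h | h | h <;> simp [h]
  have hmemT' : ∀ t : Fin n → ℝ, t ∈ T → (∀ i, t i ∈ thirds) := by
    intro t ht i
    rw [hT, Fintype.mem_piFinset] at ht
    have := ht i
    simp only [Finset.mem_insert, Finset.mem_singleton] at this
    simp only [thirds, Set.mem_insert_iff, Set.mem_singleton_iff]
    tauto
  have hgS : ∀ t : Fin n → ℝ, (∀ i, t i ∈ thirds) → (∑' j : ℤ, g t j) ≤ S := by
    intro t ht
    have : (∑' j : ℤ, g t j) = fracIntGrid n α (transGrid n t) f x :=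
      (fracIntGrid_eq hn α t f x).symm
    rw [this, hS]
    exact le_iSup₂ (f := fun s (_ : ∀ i, s i ∈ thirds) =>
      fracIntGrid n α (transGrid n s) f x) t ht
  set A : ℤ → Set (Eucl n) := fun k =>
    {y | (2:ℝ) ^ (k-1) ≤ ‖x - y‖ ∧ ‖x - y‖ < (2:ℝ) ^ k} with hA
  have hmeasA : ∀ k, MeasurableSet (A k) := by
    intro k
    have hcont : Continuous fun y : Eucl n => ‖x - y‖ :=
      (continuous_const.sub continuous_id).norm
    exact (hcont.measurable measurableSet_Ico :)
  have hsplit : fracIntE n α f x ≤ ∑' k : ℤ,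
      ∫⁻ y in A k, ENNReal.ofReal (f y) * ENNReal.ofReal (‖x - y‖ ^ (α - (n:ℝ))) := by
    set F := fun y => ENNReal.ofReal (f y) * ENNReal.ofReal (‖x - y‖ ^ (α - (n:ℝ))) with hF
    have hcover : (Set.univ : Set (Eucl n)) ⊆ {x} ∪ ⋃ k : ℤ, A k := by
      intro y _
      by_cases hxy : y = x
      · exact Or.inl (by simp [hxy])
      right
      have hr : 0 < ‖x - y‖ := by
        rw [norm_pos_iff]
        exact sub_ne_zero.mpr (Ne.symm hxy)
      set r := ‖x - y‖
      refine Set.mem_iUnion.2 ⟨⌊Real.logb 2 r⌋ + 1, ?_, ?_⟩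
      · have : ((⌊Real.logb 2 r⌋ + 1 - 1 : ℤ) : ℝ) ≤ Real.logb 2 r := by
          push_cast
          linarith [Int.floor_le (Real.logb 2 r)]
        calc (2:ℝ) ^ (⌊Real.logb 2 r⌋ + 1 - 1 : ℤ)
            = (2:ℝ) ^ ((⌊Real.logb 2 r⌋ + 1 - 1 : ℤ) : ℝ) := (Real.rpow_intCast 2 _).symm
          _ ≤ (2:ℝ) ^ (Real.logb 2 r) :=
              Real.rpow_le_rpow_of_exponent_le (by norm_num) this
          _ = r := Real.rpow_logb two_pos (by norm_num) hr
      · have : Real.logb 2 r < ((⌊Real.logb 2 r⌋ + 1 : ℤ) : ℝ) := by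
          push_cast
          linarith [Int.lt_floor_add_one (Real.logb 2 r)]
        calc r = (2:ℝ) ^ (Real.logb 2 r) := (Real.rpow_logb two_pos (by norm_num) hr).symm
          _ < (2:ℝ) ^ ((⌊Real.logb 2 r⌋ + 1 : ℤ) : ℝ) :=
              Real.rpow_lt_rpow_of_exponent_lt (by norm_num) this
          _ = (2:ℝ) ^ (⌊Real.logb 2 r⌋ + 1 : ℤ) := Real.rpow_intCast 2 _
    have hsing : (∫⁻ y in ({x} : Set (Eucl n)), F y) = 0 := by
      rw [Measure.restrict_eq_zero.mpr (volume_singleton' hn x), lintegral_zero_measure]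
    calc ∫⁻ y, F y = ∫⁻ y in Set.univ, F y := (setLIntegral_univ _).symm
      _ ≤ ∫⁻ y in {x} ∪ ⋃ k : ℤ, A k, F y := lintegral_mono_set hcover
      _ ≤ (∫⁻ y in ({x} : Set (Eucl n)), F y) + ∫⁻ y in ⋃ k : ℤ, A k, F y :=
          lintegral_union_le _ _ _
      _ = ∫⁻ y in ⋃ k : ℤ, A k, F y := by rw [hsing, zero_add]
      _ ≤ ∑' k : ℤ, ∫⁻ y in A k, F y := lintegral_iUnion_le _ _
  have hk : ∀ k : ℤ, (∫⁻ y in A k, ENNReal.ofReal (f y) * ENNReal.ofReal (‖x - y‖ ^ (α - (n:ℝ))))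
      ≤ ENNReal.ofReal Cst * ∑ t ∈ T, g t (k+3) := by
    intro k
    obtain ⟨t, ht, hfr⟩ := exists_good_t x (k+3)
    have hAQ : A k ⊆ gridCube n t (k+3) x := by
      intro y hy
      apply mem_gridCube_of_close hfr
      rw [norm_sub_rev]
      calc ‖x - y‖ < (2:ℝ) ^ k := hy.2
        _ ≤ (2:ℝ) ^ (k+3) / 6 := by
            rw [zpow_add₀ (two_ne_zero : (2:ℝ) ≠ 0) k 3]
            have : (0:ℝ) < (2:ℝ) ^ k := zpow_pos two_pos k
            nlinarith
    calc (∫⁻ y in A k, ENNReal.ofReal (f y) * ENNReal.ofReal (‖x - y‖ ^ (α - (n:ℝ))))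
        ≤ ∫⁻ y in A k, ENNReal.ofReal (f y)
            * ENNReal.ofReal (((2:ℝ) ^ (k-1)) ^ (α - (n:ℝ))) := by
          refine setLIntegral_mono' (hmeasA k) (fun y hy => ?_)
          exact mul_le_mul_right (ENNReal.ofReal_le_ofReal
            (Real.rpow_le_rpow_of_nonpos (zpow_pos two_pos _) hy.1 hβ.le)) _
      _ = ENNReal.ofReal (((2:ℝ) ^ (k-1)) ^ (α - (n:ℝ))) * ∫⁻ y in A k, ENNReal.ofReal (f y) := by
          rw [lintegral_mul_const' _ _ ENNReal.ofReal_ne_top, mul_comm]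
      _ ≤ ENNReal.ofReal (((2:ℝ) ^ (k-1)) ^ (α - (n:ℝ)))
            * ∫⁻ y in gridCube n t (k+3) x, ENNReal.ofReal (f y) :=
          mul_le_mul_right (lintegral_mono_set hAQ) _
      _ = ENNReal.ofReal Cst * g t (k+3) := by
          rw [hg]
          dsimp only
          rw [← mul_assoc, ← ENNReal.ofReal_mul hCstpos.le]
          congr 2
          rw [hCst, ← Real.mul_rpow (by positivity) (by positivity),
            ← zpow_add₀ (two_ne_zero : (2:ℝ) ≠ 0)]
          congr 2
          ring
      _ ≤ ENNReal.ofReal Cst * ∑ t' ∈ T, g t' (k+3) :=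
          mul_le_mul_right (Finset.single_le_sum
            (fun t' _ => (zero_le : 0 ≤ g t' (k+3))) (hmemT t ht)) _
  calc fracIntE n α f x
      ≤ ∑' k : ℤ, ∫⁻ y in A k, ENNReal.ofReal (f y)
          * ENNReal.ofReal (‖x - y‖ ^ (α - (n:ℝ))) := hsplit
    _ ≤ ∑' k : ℤ, ENNReal.ofReal Cst * ∑ t ∈ T, g t (k+3) :=
        Summable.tsum_le_tsum hk ENNReal.summable ENNReal.summable
    _ = ENNReal.ofReal Cst * ∑' k : ℤ, ∑ t ∈ T, g t (k+3) := ENNReal.tsum_mul_left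
    _ = ENNReal.ofReal Cst * ∑ t ∈ T, ∑' k : ℤ, g t (k+3) := by
        rw [Summable.tsum_finsetSum (fun _ _ => ENNReal.summable)]
    _ = ENNReal.ofReal Cst * ∑ t ∈ T, ∑' j : ℤ, g t j := by
        congr 1
        refine Finset.sum_congr rfl (fun t _ => ?_)
        exact (Equiv.addRight (3:ℤ)).tsum_eq (g t)
    _ ≤ ENNReal.ofReal Cst * ∑ t ∈ T, S :=
        mul_le_mul_right (Finset.sum_le_sum (fun t ht => hgS t (hmemT' t ht))) _
    _ = ENNReal.ofReal Cst * ((T.card : ℝ≥0∞) * S) := by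
        rw [Finset.sum_const, nsmul_eq_mul]
    _ ≤ ENNReal.ofReal Cst * ((3:ℝ≥0∞) ^ n * S) := by
        apply mul_le_mul_right
        apply mul_le_mul_left
        have hcard : T.card ≤ 3 ^ n := by
          rw [hT, Fintype.card_piFinset]
          calc ∏ _i : Fin n, ({0, 1/3, -1/3} : Finset ℝ).card
              ≤ ∏ _i : Fin n, 3 := by
                refine Finset.prod_le_prod (fun _ _ => Nat.zero_le _) (fun i _ => ?_)
                refine (Finset.card_insert_le _ _).trans (Nat.succ_le_succ ?_)
                refine (Finset.card_insert_le _ _).trans (Nat.succ_le_succ ?_)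
                simp
            _ = 3 ^ n := by simp
        calc (T.card : ℝ≥0∞) ≤ ((3 ^ n : ℕ) : ℝ≥0∞) := Nat.cast_le.2 hcard
          _ = (3:ℝ≥0∞) ^ n := by push_cast; rfl
    _ = ENNReal.ofReal (Cst * 3 ^ n) * S := by
        rw [ENNReal.ofReal_mul hCstpos.le, mul_assoc]
        congr 2
        rw [ENNReal.ofReal_pow (by norm_num : (0:ℝ) ≤ 3)]
        norm_num

end
end Statement3Aux

/-- dyadic domination of the fractional integral. -/
theorem statement3 (n : ℕ) (hn : 0 < n) (α : ℝ) (hα0 : 0 < α) (hαn : α < n) :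
    ∃ c C : ℝ≥0, 0 < c ∧ 0 < C ∧
      ∀ f : Eucl n → ℝ, LocallyIntegrable f volume → (∀ y, 0 ≤ f y) →
        ∀ x : Eucl n, ∀ t : Fin n → ℝ, (∀ i, t i ∈ thirds) →
          (c : ℝ≥0∞) * fracIntGrid n α (transGrid n t) f x ≤ fracIntE n α f x ∧
          fracIntE n α f x ≤
            (C : ℝ≥0∞) * ⨆ (s : Fin n → ℝ) (_ : ∀ i, s i ∈ thirds),
              fracIntGrid n α (transGrid n s) f x := by
  have hn' : (0:ℝ) < n := by exact_mod_cast hn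
  have hβ : α - (n:ℝ) < 0 := by linarith
  have h2β1 : (2:ℝ) ^ (α - (n:ℝ)) < 1 :=
    Real.rpow_lt_one_of_one_lt_of_neg (by norm_num) hβ
  have hsq : (0:ℝ) < Real.sqrt n := Real.sqrt_pos.2 hn'
  have h1m : (0:ℝ) < 1 - (2:ℝ) ^ (α - (n:ℝ)) := by linarith
  have hKpos : 0 < Real.sqrt n ^ ((n:ℝ) - α) * (1 - (2:ℝ) ^ (α - (n:ℝ)))⁻¹ := by
    have h2 : (0:ℝ) < Real.sqrt n ^ ((n:ℝ) - α) := Real.rpow_pos_of_pos hsq _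
    positivity
  have hCpos : 0 < (((2:ℝ) ^ (-4:ℤ)) ^ (α - (n:ℝ))) * 3 ^ n := by
    have h2 : (0:ℝ) < ((2:ℝ) ^ (-4:ℤ)) ^ (α - (n:ℝ)) :=
      Real.rpow_pos_of_pos (by positivity) _
    positivity
  refine ⟨((Real.sqrt n ^ ((n:ℝ) - α) * (1 - (2:ℝ) ^ (α - (n:ℝ)))⁻¹)⁻¹).toNNReal,
    ((((2:ℝ) ^ (-4:ℤ)) ^ (α - (n:ℝ))) * 3 ^ n).toNNReal,
    Real.toNNReal_pos.2 (inv_pos.2 hKpos), Real.toNNReal_pos.2 hCpos, ?_⟩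
  intro f hfli _ x t _
  have hmeas : AEMeasurable f volume := hfli.aestronglyMeasurable.aemeasurable
  constructor
  · exact Statement3Aux.lower_bound hn hα0 hαn f hmeas x t
  · exact Statement3Aux.upper_bound hn hα0 hαn f hmeas x
end

section
/- Let 0 < α < n. There exists a constant C(n,α) such that for every nonnegative f ∈ L¹_loc(ℝ^n), every b ∈ BMO(ℝ^n), and every x ∈ ℝ^n, |[b, I_α]f(x)| ≤ C(n,α) sup_{t ∈ {0,±1/3}^n} C_b^{D^t} f(x), where for a dyadic grid D, C_b^D f(x) = Σ_{Q ∈ D} |Q|^{α/n} ⟨|b(x) − b(·)| f⟩_Q χ_Q(x) = Σ_{Q ∈ D} |Q|^{α/n} (|Q|^{-1} ∫_Q |b(x) − b(y)| f(y) dy) χ_Q(x). -/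
open MeasureTheory ENNReal Set Filter
open scoped NNReal

lemma cube_eq_preimage (n : ℕ) (a : Fin n → ℝ) (h : ℝ) :
    cube n a h = (⇑(MeasurableEquiv.toLp 2 (Fin n → ℝ)).symm) ⁻¹'
      (Set.univ.pi fun i => Ico (a i) (a i + h)) := by
  ext x
  simp [cube, Set.mem_pi, mem_Ico]

lemma cube_measurable (n : ℕ) (a : Fin n → ℝ) (h : ℝ) : MeasurableSet (cube n a h) := by
  rw [cube_eq_preimage]
  exact (MeasurableEquiv.toLp 2 (Fin n → ℝ)).symm.measurable
    (MeasurableSet.univ_pi fun i => measurableSet_Ico)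

lemma volume_cube (n : ℕ) (a : Fin n → ℝ) (h : ℝ) :
    volume (cube n a h) = ENNReal.ofReal h ^ n := by
  rw [cube_eq_preimage,
    (EuclideanSpace.volume_preserving_symm_measurableEquiv_toLp (Fin n)).measure_preimage
      (MeasurableSet.univ_pi fun i => measurableSet_Ico).nullMeasurableSet,
    volume_pi_pi]
  simp [Real.volume_Ico]

lemma coord_le_norm {n : ℕ} (x : Eucl n) (i : Fin n) : |x i| ≤ ‖x‖ := by
  rw [EuclideanSpace.norm_eq, ← Real.sqrt_sq_eq_abs]
  apply Real.sqrt_le_sqrt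
  have := Finset.single_le_sum (f := fun j => ‖x j‖ ^ 2)
    (fun j _ => by positivity) (Finset.mem_univ i)
  simpa [Real.norm_eq_abs, sq_abs] using this

lemma transGrid_countable (n : ℕ) (t : Fin n → ℝ) : (transGrid n t).Countable := by
  have : transGrid n t ⊆ Set.range (fun p : ℤ × (Fin n → ℤ) =>
      cube n (fun i => (2:ℝ) ^ p.1 * ((p.2 i : ℝ) + t i)) ((2:ℝ) ^ p.1)) := by
    rintro Q ⟨j, m, rfl⟩; exact ⟨(j, m), rfl⟩
  exact (Set.countable_range _).mono this

lemma transGrid_measurable (n : ℕ) (t : Fin n → ℝ) {Q : Set (Eucl n)}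
    (hQ : Q ∈ transGrid n t) : MeasurableSet Q := by
  obtain ⟨j, m, rfl⟩ := hQ; exact cube_measurable _ _ _

lemma oneD (s u v : ℝ) (hs : 0 < s) (h3 : v - u ≤ s/3) :
    ∃ (t : ℝ) (m : ℤ), t ∈ thirds ∧ s*(m+t) ≤ u ∧ v < s*(m+t) + s := by
  set k : ℤ := ⌊3*u/s⌋ with hk
  set m : ℤ := (k+1)/3 with hm
  set d : ℤ := k - 3*m with hd
  have hdr : d = -1 ∨ d = 0 ∨ d = 1 := by
    have h1 := Int.mul_ediv_add_emod (k+1) 3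
    have h2 := Int.emod_nonneg (k+1) (by norm_num : (3:ℤ) ≠ 0)
    have h3 := Int.emod_lt_of_pos (k+1) (by norm_num : (0:ℤ) < 3)
    omega
  have heq : (m:ℝ) + (d:ℝ)/3 = (k:ℝ)/3 := by
    have : (d:ℝ) = (k:ℝ) - 3*(m:ℝ) := by push_cast [hd]; ring
    rw [this]; ring
  refine ⟨(d:ℝ)/3, m, ?_, ?_, ?_⟩
  · rcases hdr with h|h|h <;> simp [h, thirds]
  · have h1 : ((k:ℝ)) ≤ 3*u/s := Int.floor_le _
    rw [heq, le_div_iff₀ hs] at *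
    nlinarith
  · have h2 : 3*u/s < (k:ℝ)+1 := Int.lt_floor_add_one _
    rw [heq]
    rw [div_lt_iff₀ hs] at h2
    nlinarith

lemma exists_cube (n : ℕ) (x y : Eucl n) (hxy : 0 < ‖x - y‖) :
    ∃ (t : Fin n → ℝ) (j : ℤ) (m : Fin n → ℤ), (∀ i, t i ∈ thirds) ∧
      x ∈ cube n (fun i => (2:ℝ) ^ j * ((m i : ℝ) + t i)) ((2:ℝ) ^ j) ∧
      y ∈ cube n (fun i => (2:ℝ) ^ j * ((m i : ℝ) + t i)) ((2:ℝ) ^ j) ∧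
      (2:ℝ) ^ j ≤ 6 * ‖x - y‖ := by
  set r := ‖x - y‖ with hr
  set j : ℤ := ⌈Real.logb 2 (3*r)⌉ with hj
  have h3r : 0 < 3 * r := by linarith
  have hsl : (3:ℝ) * r ≤ 2 ^ j := by
    calc (3:ℝ)*r = 2 ^ Real.logb 2 (3*r) := (Real.rpow_logb two_pos (by norm_num) h3r).symm
    _ ≤ 2 ^ ((j:ℤ):ℝ) := Real.rpow_le_rpow_of_exponent_le one_le_two (Int.le_ceil _)
    _ = 2 ^ j := Real.rpow_intCast 2 j
  have hsu : (2:ℝ) ^ j ≤ 6 * r := by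
    calc (2:ℝ) ^ j = 2 ^ ((j:ℤ):ℝ) := (Real.rpow_intCast 2 j).symm
    _ ≤ 2 ^ (Real.logb 2 (3*r) + 1) := Real.rpow_le_rpow_of_exponent_le one_le_two
        (le_of_lt (Int.ceil_lt_add_one _))
    _ = 2 ^ Real.logb 2 (3*r) * 2 ^ (1:ℝ) := Real.rpow_add two_pos _ _
    _ = 6 * r := by rw [Real.rpow_logb two_pos (by norm_num) h3r, Real.rpow_one]; ring
  have hs : (0:ℝ) < 2 ^ j := zpow_pos two_pos j
  have hcoord : ∀ i, ∃ (t : ℝ) (m : ℤ), t ∈ thirds ∧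
      (2:ℝ)^j * (m + t) ≤ min (x i) (y i) ∧
      max (x i) (y i) < (2:ℝ)^j * (m + t) + 2^j := by
    intro i
    apply oneD _ _ _ hs
    have h1 : |x i - y i| ≤ r := by
      have := coord_le_norm (x - y) i
      simpa using this
    have : max (x i) (y i) - min (x i) (y i) = |x i - y i| := by
      rcases le_total (x i) (y i) with h|h
      · rw [max_eq_right h, min_eq_left h, abs_sub_comm, abs_of_nonneg (by linarith)]
      · rw [max_eq_left h, min_eq_right h, abs_of_nonneg (by linarith)]
    rw [this]
    calc |x i - y i| ≤ r := h1
    _ ≤ 2^j/3 := by linarith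
  choose t m ht h1 h2 using hcoord
  exact ⟨t, j, m, ht, fun i => ⟨le_trans (h1 i) (min_le_left _ _),
      lt_of_le_of_lt (le_max_left _ _) (h2 i)⟩,
    fun i => ⟨le_trans (h1 i) (min_le_right _ _),
      lt_of_le_of_lt (le_max_right _ _) (h2 i)⟩, hsu⟩

lemma vol_pow_div (n : ℕ) (hn : 0 < n) (α : ℝ) {s : ℝ} (hs : 0 < s) (a : Fin n → ℝ) :
    volume (cube n a s) ^ (α/(n:ℝ)) / volume (cube n a s)
      = ENNReal.ofReal (s ^ (α - (n:ℝ))) := by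
  have h0 : ENNReal.ofReal s ≠ 0 := by simp [ENNReal.ofReal_eq_zero]; linarith
  have ht : ENNReal.ofReal s ≠ ⊤ := ENNReal.ofReal_ne_top
  have hnr : (n:ℝ) ≠ 0 := Nat.cast_ne_zero.2 hn.ne'
  rw [volume_cube, ← ENNReal.rpow_natCast (ENNReal.ofReal s) n, ← ENNReal.rpow_mul]
  have he : (n:ℝ) * (α/(n:ℝ)) = α := by field_simp
  rw [he, div_eq_mul_inv, ← ENNReal.rpow_neg, ← ENNReal.rpow_add _ _ h0 ht,
    ENNReal.ofReal_rpow_of_pos hs]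
  ring_nf


/-- dyadic domination of the commutator. -/
theorem statement4 (n : ℕ) (hn : 0 < n) (α : ℝ) (hα0 : 0 < α) (hαn : α < n) :
    ∃ C : ℝ≥0, 0 < C ∧
      ∀ f b : Eucl n → ℝ, LocallyIntegrable f volume → (∀ y, 0 ≤ f y) →
        LocallyIntegrable b volume → bmoNorm n b ≠ ⊤ →
        ∀ x : Eucl n,
          ENNReal.ofReal |commFrac n α b f x| ≤
            (C : ℝ≥0∞) * ⨆ (t : Fin n → ℝ) (_ : ∀ i, t i ∈ thirds),
              commGrid n α (transGrid n t) b f x := by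
  
  have h6 : (0:ℝ) < 6 ^ ((n:ℝ) - α) := Real.rpow_pos_of_pos (by norm_num) _
  refine ⟨Real.toNNReal (6 ^ ((n:ℝ) - α)) * 3 ^ n,
    mul_pos (Real.toNNReal_pos.2 h6) (pow_pos (by norm_num) n), ?_⟩
  intro f b hf hf0 hb _ x
  -- the finset of shifts
  classical
  set T : Finset (Fin n → ℝ) :=
    Fintype.piFinset (fun _ : Fin n => ({0, 1/3, -1/3} : Finset ℝ)) with hT
  -- the pointwise weight
  set g : Eucl n → ℝ≥0∞ := fun y => ENNReal.ofReal (|b x - b y| * f y) with hg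
  have hgm : AEMeasurable g volume :=
    (((measurable_abs.comp_aemeasurable
      (aemeasurable_const.sub hb.aestronglyMeasurable.aemeasurable)).mul
      hf.aestronglyMeasurable.aemeasurable).ennreal_ofReal)
  -- the per-grid sum
  set F : (Fin n → ℝ) → Eucl n → ℝ≥0∞ := fun t y =>
    ∑' Q : transGrid n t, Set.indicator (Q : Set (Eucl n))
      (fun _ => Set.indicator (Q : Set (Eucl n))
        (fun _ => volume (Q : Set (Eucl n)) ^ (α / (n:ℝ)) / volume (Q : Set (Eucl n))) x) y
    with hF
  have hFm : ∀ t, Measurable (F t) := by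
    intro t
    haveI := (transGrid_countable n t).to_subtype
    exact Measurable.ennreal_tsum fun Q =>
      measurable_const.indicator (transGrid_measurable n t Q.2)
  -- Step 1
  have step1 : ENNReal.ofReal |commFrac n α b f x| ≤
      ∫⁻ y, g y * ENNReal.ofReal (‖x - y‖ ^ (α - (n:ℝ))) := by
    rw [← Real.norm_eq_abs, ofReal_norm]
    refine le_trans (enorm_integral_le_lintegral_enorm _) (le_of_eq ?_)
    apply lintegral_congr
    intro y
    rw [← ofReal_norm, Real.norm_eq_abs]
    have hk : (0:ℝ) ≤ ‖x - y‖ ^ (α - (n:ℝ)) := Real.rpow_nonneg (norm_nonneg _) _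
    rw [abs_mul, abs_mul, abs_of_nonneg (hf0 y), abs_of_nonneg hk,
      ENNReal.ofReal_mul (mul_nonneg (abs_nonneg _) (hf0 y))]
  -- Step 2 : pointwise kernel bound
  have step2 : ∀ y, ENNReal.ofReal (‖x - y‖ ^ (α - (n:ℝ))) ≤
      ENNReal.ofReal (6 ^ ((n:ℝ) - α)) * ∑ t ∈ T, F t y := by
    intro y
    rcases eq_or_lt_of_le (norm_nonneg (x - y)) with h0 | hpos
    · rw [← h0, Real.zero_rpow (by linarith), ENNReal.ofReal_zero]
      exact zero_le
    obtain ⟨t, j, m, ht, hxQ, hyQ, hju⟩ := exists_cube n x y hpos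
    set Q : Set (Eucl n) := cube n (fun i => (2:ℝ) ^ j * ((m i : ℝ) + t i)) ((2:ℝ) ^ j) with hQdef
    have hQmem : Q ∈ transGrid n t := ⟨j, m, rfl⟩
    have hs : (0:ℝ) < 2 ^ j := zpow_pos two_pos j
    have key : ENNReal.ofReal (‖x - y‖ ^ (α - (n:ℝ))) ≤
        ENNReal.ofReal (6 ^ ((n:ℝ) - α)) * (volume Q ^ (α/(n:ℝ)) / volume Q) := by
      rw [hQdef, vol_pow_div n hn α hs, ← ENNReal.ofReal_mul (le_of_lt h6)]
      apply ENNReal.ofReal_le_ofReal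
      have hr6 : (2:ℝ)^j / 6 ≤ ‖x - y‖ := by linarith
      have h1 : ‖x - y‖ ^ (α - (n:ℝ)) ≤ ((2:ℝ)^j / 6) ^ (α - (n:ℝ)) :=
        Real.rpow_le_rpow_of_nonpos (div_pos hs (by norm_num)) hr6 (by linarith)
      calc ‖x - y‖ ^ (α - (n:ℝ)) ≤ ((2:ℝ)^j / 6) ^ (α - (n:ℝ)) := h1
      _ = ((2:ℝ)^j) ^ (α - (n:ℝ)) / 6 ^ (α - (n:ℝ)) :=
          Real.div_rpow (le_of_lt hs) (by norm_num) _
      _ = 6 ^ ((n:ℝ) - α) * ((2:ℝ)^j) ^ (α - (n:ℝ)) := by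
          rw [div_eq_mul_inv, ← Real.rpow_neg (by norm_num : (0:ℝ) ≤ 6)]
          ring_nf
    have hterm : (volume Q ^ (α/(n:ℝ)) / volume Q) ≤ F t y := by
      have := ENNReal.le_tsum (f := fun Q : transGrid n t =>
        Set.indicator (Q : Set (Eucl n)) (fun _ => Set.indicator (Q : Set (Eucl n))
          (fun _ => volume (Q : Set (Eucl n)) ^ (α / (n:ℝ)) / volume (Q : Set (Eucl n))) x) y)
        ⟨Q, hQmem⟩
      simpa [Set.indicator_of_mem hyQ, Set.indicator_of_mem hxQ] using this
    have htT : t ∈ T := by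
      rw [hT, Fintype.mem_piFinset]
      intro i
      have := ht i
      simpa [thirds, Finset.mem_insert] using this
    have hsum : F t y ≤ ∑ t' ∈ T, F t' y :=
      Finset.single_le_sum (f := fun t' => F t' y) (fun _ _ => zero_le) htT
    calc ENNReal.ofReal (‖x - y‖ ^ (α - (n:ℝ)))
        ≤ ENNReal.ofReal (6 ^ ((n:ℝ) - α)) * (volume Q ^ (α/(n:ℝ)) / volume Q) := key
      _ ≤ ENNReal.ofReal (6 ^ ((n:ℝ) - α)) * F t y := mul_le_mul_right hterm _
      _ ≤ _ := mul_le_mul_right hsum _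
  -- Step 4 : per-grid identity
  have step4 : ∀ t : Fin n → ℝ, (∫⁻ y, g y * F t y) =
      commGrid n α (transGrid n t) b f x := by
    intro t
    haveI := (transGrid_countable n t).to_subtype
    have hrw : ∀ y, g y * F t y = ∑' Q : transGrid n t,
        Set.indicator (Q : Set (Eucl n)) (fun y' => g y' * Set.indicator (Q : Set (Eucl n))
          (fun _ => volume (Q : Set (Eucl n)) ^ (α / (n:ℝ)) / volume (Q : Set (Eucl n))) x) y := by
      intro y
      rw [hF, ← ENNReal.tsum_mul_left]
      apply tsum_congr
      intro Q
      by_cases hy : y ∈ (Q : Set (Eucl n)) <;>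
        simp [Set.indicator_of_mem, Set.indicator_of_notMem, hy]
    rw [lintegral_congr hrw, lintegral_tsum]
    · apply tsum_congr
      intro Q
      rw [lintegral_indicator (transGrid_measurable n t Q.2),
        lintegral_mul_const'' _ hgm.restrict]
      by_cases hx : x ∈ (Q : Set (Eucl n))
      · rw [Set.indicator_of_mem hx, Set.indicator_of_mem hx]
        simp only [hg, lavg, div_eq_mul_inv]
        ring
      · rw [Set.indicator_of_notMem hx, Set.indicator_of_notMem hx, mul_zero]
    · intro Q
      exact (hgm.mul aemeasurable_const).indicator (transGrid_measurable n t Q.2)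
  -- Step 5 : sum over shifts vs sup
  have step5 : ∑ t ∈ T, commGrid n α (transGrid n t) b f x ≤
      (3:ℝ≥0∞) ^ n * ⨆ (t : Fin n → ℝ) (_ : ∀ i, t i ∈ thirds),
        commGrid n α (transGrid n t) b f x := by
    have hcard : T.card ≤ 3 ^ n := by
      rw [hT, Fintype.card_piFinset]
      calc ∏ _i : Fin n, ({0, 1/3, -1/3} : Finset ℝ).card
          ≤ ∏ _i : Fin n, 3 := Finset.prod_le_prod' (fun _ _ => by
            refine le_trans (Finset.card_insert_le _ _) ?_
            refine Nat.succ_le_succ (le_trans (Finset.card_insert_le _ _) ?_)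
            simp)
        _ = 3 ^ n := by simp
    have hbd : ∀ t ∈ T, commGrid n α (transGrid n t) b f x ≤
        ⨆ (t : Fin n → ℝ) (_ : ∀ i, t i ∈ thirds), commGrid n α (transGrid n t) b f x := by
      intro t htT
      have ht : ∀ i, t i ∈ thirds := by
        rw [hT, Fintype.mem_piFinset] at htT
        intro i
        have := htT i
        simpa [thirds, Finset.mem_insert] using this
      exact le_iSup₂ (f := fun (t : Fin n → ℝ) (_ : ∀ i, t i ∈ thirds) =>
        commGrid n α (transGrid n t) b f x) t ht
    calc ∑ t ∈ T, commGrid n α (transGrid n t) b f x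
        ≤ T.card • _ := Finset.sum_le_card_nsmul T _ _ hbd
      _ = (T.card : ℝ≥0∞) * _ := by rw [nsmul_eq_mul]
      _ ≤ (3:ℝ≥0∞) ^ n * _ := by
          apply mul_le_mul_left
          calc (T.card : ℝ≥0∞) ≤ ((3^n : ℕ) : ℝ≥0∞) := Nat.cast_le.2 hcard
          _ = (3:ℝ≥0∞) ^ n := by push_cast; ring
  -- assemble
  calc ENNReal.ofReal |commFrac n α b f x|
      ≤ ∫⁻ y, g y * ENNReal.ofReal (‖x - y‖ ^ (α - (n:ℝ))) := step1
    _ ≤ ∫⁻ y, ENNReal.ofReal (6 ^ ((n:ℝ) - α)) * ∑ t ∈ T, g y * F t y := by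
        apply lintegral_mono
        intro y
        dsimp only
        calc g y * ENNReal.ofReal (‖x - y‖ ^ (α - (n:ℝ)))
            ≤ g y * (ENNReal.ofReal (6 ^ ((n:ℝ) - α)) * ∑ t ∈ T, F t y) :=
              mul_le_mul_right (step2 y) _
          _ = ENNReal.ofReal (6 ^ ((n:ℝ) - α)) * ∑ t ∈ T, g y * F t y := by
              rw [← mul_assoc, mul_comm (g y), mul_assoc, Finset.mul_sum]
    _ = ENNReal.ofReal (6 ^ ((n:ℝ) - α)) * ∑ t ∈ T, ∫⁻ y, g y * F t y := by
        rw [lintegral_const_mul' _ _ ENNReal.ofReal_ne_top,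
          lintegral_finset_sum' T (f := fun t y => g y * F t y) (fun t _ => hgm.mul (hFm t).aemeasurable)]
    _ = ENNReal.ofReal (6 ^ ((n:ℝ) - α)) *
          ∑ t ∈ T, commGrid n α (transGrid n t) b f x := by
        congr 1
        exact Finset.sum_congr rfl fun t _ => step4 t
    _ ≤ ENNReal.ofReal (6 ^ ((n:ℝ) - α)) * ((3:ℝ≥0∞) ^ n *
          ⨆ (t : Fin n → ℝ) (_ : ∀ i, t i ∈ thirds),
            commGrid n α (transGrid n t) b f x) := mul_le_mul_right step5 _
    _ = _ := by
        rw [← mul_assoc]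
        congr 1
end

section
/- Let 0 < α < n and let D be a dyadic grid in ℝ^n. For every nonnegative f ∈ L¹_loc(ℝ^n) with ⟨f⟩_Q → 0 as |Q| → ∞ over Q ∈ D, there exists a sparse family S = S(f) ⊂ D and a constant C(n,α) independent of f such that for every x ∈ ℝ^n, I_α^S f(x) ≤ I_α^D f(x) ≤ C(n,α) I_α^S f(x). -/
open MeasureTheory ENNReal Set Filter
open scoped NNReal

noncomputable section Aux
open MeasureTheory ENNReal Set

namespace Sp6

variable {n : ℕ}

lemma cube_eq_preimage (a : Fin n → ℝ) (h : ℝ) :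
    cube n a h = (MeasurableEquiv.toLp 2 (Fin n → ℝ)).symm ⁻¹'
      (Set.univ.pi fun i => Set.Ico (a i) (a i + h)) := by
  ext x
  simp [cube, MeasurableEquiv.coe_toLp_symm, Set.mem_pi]

lemma measurableSet_cube (a : Fin n → ℝ) (h : ℝ) : MeasurableSet (cube n a h) := by
  rw [cube_eq_preimage]
  exact (MeasurableEquiv.toLp 2 (Fin n → ℝ)).symm.measurable
    (MeasurableSet.univ_pi fun i => measurableSet_Ico)

lemma volume_cube (a : Fin n → ℝ) {h : ℝ} (hh : 0 ≤ h) :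
    volume (cube n a h) = ENNReal.ofReal h ^ n := by
  rw [cube_eq_preimage,
    (EuclideanSpace.volume_preserving_symm_measurableEquiv_toLp (Fin n)).measure_preimage
      (MeasurableSet.univ_pi fun i => measurableSet_Ico).nullMeasurableSet,
    volume_pi_pi]
  simp [Real.volume_Ico]

lemma cube_nonempty (a : Fin n → ℝ) {h : ℝ} (hh : 0 < h) : (cube n a h).Nonempty :=
  ⟨(show Eucl n from WithLp.toLp 2 a), fun i => ⟨le_refl _, show a i < a i + h by linarith⟩⟩

end Sp6
end Aux
noncomputable section Aux2
open MeasureTheory ENNReal Set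
namespace Sp6
variable {n : ℕ} {D : Set (Set (Eucl n))}

/-- side length as a function of scale -/
def sc (k : ℤ) : ℝ := (2:ℝ) ^ k

lemma sc_pos (k : ℤ) : 0 < sc k := zpow_pos two_pos k

lemma volume_cube_sc (a : Fin n → ℝ) (k : ℤ) :
    volume (cube n a (sc k)) = ENNReal.ofReal ((sc k) ^ n) := by
  rw [volume_cube a (sc_pos k).le, ← ENNReal.ofReal_pow (sc_pos k).le]

lemma scale_le_of_vol_le (hn : 0 < n) {j k : ℤ}
    (h : ENNReal.ofReal ((sc j) ^ n) ≤ ENNReal.ofReal ((sc k) ^ n)) : j ≤ k := by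
  rw [ENNReal.ofReal_le_ofReal_iff (pow_nonneg (sc_pos k).le n)] at h
  have h2 : sc j ≤ sc k :=
    (pow_le_pow_iff_left₀ (sc_pos j).le (sc_pos k).le hn.ne').mp h
  exact (zpow_le_zpow_iff_right₀ (by norm_num : (1:ℝ) < 2)).mp h2

/-- the unique scale-`k` cube of `D` containing `x` -/
def Qx (hD : IsDyadicGrid n D) (k : ℤ) (x : Eucl n) : Set (Eucl n) :=
  (hD.2.2 k x).exists.choose

lemma Qx_spec (hD : IsDyadicGrid n D) (k : ℤ) (x : Eucl n) :
    Qx hD k x ∈ D ∧ (∃ a, Qx hD k x = cube n a (sc k)) ∧ x ∈ Qx hD k x :=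
  (hD.2.2 k x).exists.choose_spec

lemma Qx_mem (hD : IsDyadicGrid n D) (k : ℤ) (x : Eucl n) : Qx hD k x ∈ D :=
  (Qx_spec hD k x).1

lemma mem_Qx (hD : IsDyadicGrid n D) (k : ℤ) (x : Eucl n) : x ∈ Qx hD k x :=
  (Qx_spec hD k x).2.2

lemma Qx_unique (hD : IsDyadicGrid n D) {k : ℤ} {x : Eucl n} {Q : Set (Eucl n)}
    (hQ : Q ∈ D) (ha : ∃ a, Q = cube n a (sc k)) (hx : x ∈ Q) : Q = Qx hD k x :=
  (hD.2.2 k x).unique ⟨hQ, ha, hx⟩ ⟨Qx_mem hD k x, (Qx_spec hD k x).2.1, mem_Qx hD k x⟩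

lemma volume_Qx (hD : IsDyadicGrid n D) (k : ℤ) (x : Eucl n) :
    volume (Qx hD k x) = ENNReal.ofReal ((sc k) ^ n) := by
  obtain ⟨a, ha⟩ := (Qx_spec hD k x).2.1
  rw [ha, volume_cube_sc]

/-- nested or disjoint -/
lemma grid_nested (hD : IsDyadicGrid n D) {P Q : Set (Eucl n)} (hP : P ∈ D) (hQ : Q ∈ D)
    (hne : (P ∩ Q).Nonempty) : P ⊆ Q ∨ Q ⊆ P := by
  rcases hD.2.1 P hP Q hQ with h | h | h
  · exact Or.inl (by rw [← h]; exact Set.inter_subset_right)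
  · exact Or.inr (by rw [← h]; exact Set.inter_subset_left)
  · rw [h] at hne; exact absurd hne (by simp)

/-- every cube of `D` has a well-defined scale -/
def scOf (hD : IsDyadicGrid n D) {Q : Set (Eucl n)} (hQ : Q ∈ D) : ℤ :=
  (hD.1 Q hQ).choose_spec.choose

lemma scOf_spec (hD : IsDyadicGrid n D) {Q : Set (Eucl n)} (hQ : Q ∈ D) :
    ∃ a, Q = cube n a (sc (scOf hD hQ)) :=
  ⟨(hD.1 Q hQ).choose, (hD.1 Q hQ).choose_spec.choose_spec⟩

lemma volume_of_mem (hD : IsDyadicGrid n D) {Q : Set (Eucl n)} (hQ : Q ∈ D) :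
    volume Q = ENNReal.ofReal ((sc (scOf hD hQ)) ^ n) := by
  obtain ⟨a, ha⟩ := scOf_spec hD hQ
  have := volume_cube_sc a (scOf hD hQ)
  rw [← ha] at this
  exact this

lemma eq_Qx_of_mem (hD : IsDyadicGrid n D) {Q : Set (Eucl n)} (hQ : Q ∈ D) {x : Eucl n}
    (hx : x ∈ Q) : Q = Qx hD (scOf hD hQ) x :=
  Qx_unique hD hQ (scOf_spec hD hQ) hx

lemma scale_mono (hD : IsDyadicGrid n D) (hn : 0 < n) {P Q : Set (Eucl n)} (hP : P ∈ D)
    (hQ : Q ∈ D) (hPQ : P ⊆ Q) : scOf hD hP ≤ scOf hD hQ := by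
  refine scale_le_of_vol_le hn ?_
  rw [← volume_of_mem hD hP, ← volume_of_mem hD hQ]
  exact measure_mono hPQ

lemma Qx_nested (hD : IsDyadicGrid n D) (hn : 0 < n) {j k : ℤ} (hjk : j ≤ k) (x : Eucl n) :
    Qx hD j x ⊆ Qx hD k x := by
  rcases grid_nested hD (Qx_mem hD j x) (Qx_mem hD k x)
    ⟨x, mem_Qx hD j x, mem_Qx hD k x⟩ with h | h
  · exact h
  · -- Qx k ⊆ Qx j forces k ≤ j hence j = k
    have hk : scOf hD (Qx_mem hD k x) = k := by
      have := Qx_unique hD (Qx_mem hD k x) (scOf_spec hD (Qx_mem hD k x)) (mem_Qx hD k x)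
      -- scale determined by volume
      have hv := volume_of_mem hD (Qx_mem hD k x)
      rw [volume_Qx hD k x] at hv
      exact le_antisymm (scale_le_of_vol_le hn hv.ge) (scale_le_of_vol_le hn hv.le)
    have hj : scOf hD (Qx_mem hD j x) = j := by
      have hv := volume_of_mem hD (Qx_mem hD j x)
      rw [volume_Qx hD j x] at hv
      exact le_antisymm (scale_le_of_vol_le hn hv.ge) (scale_le_of_vol_le hn hv.le)
    have := scale_mono hD hn (Qx_mem hD k x) (Qx_mem hD j x) h
    rw [hk, hj] at this
    have : j = k := le_antisymm hjk this
    subst this; exact h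

lemma scOf_Qx (hD : IsDyadicGrid n D) (hn : 0 < n) (k : ℤ) (x : Eucl n) :
    scOf hD (Qx_mem hD k x) = k := by
  have hv := volume_of_mem hD (Qx_mem hD k x)
  rw [volume_Qx hD k x] at hv
  exact le_antisymm (scale_le_of_vol_le hn hv.ge) (scale_le_of_vol_le hn hv.le)

end Sp6
end Aux2
noncomputable section Aux3
open MeasureTheory ENNReal Set
open scoped Classical
namespace Sp6
variable {n : ℕ} {D : Set (Set (Eucl n))}

/-- average of `ofReal ∘ f` over a set -/
def avgE {n : ℕ} (f : Eucl n → ℝ) (Q : Set (Eucl n)) : ℝ≥0∞ :=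
  lavg Q fun y => ENNReal.ofReal (f y)

lemma Qx_inj (hD : IsDyadicGrid n D) (hn : 0 < n) {j k : ℤ} {x : Eucl n}
    (h : Qx hD j x = Qx hD k x) : j = k := by
  have hv : ENNReal.ofReal ((sc j) ^ n) = ENNReal.ofReal ((sc k) ^ n) := by
    rw [← volume_Qx hD j x, ← volume_Qx hD k x, h]
  exact le_antisymm (scale_le_of_vol_le hn hv.le) (scale_le_of_vol_le hn hv.ge)

lemma rep_lemma (hD : IsDyadicGrid n D) (hn : 0 < n) (α : ℝ) (f : Eucl n → ℝ) (x : Eucl n)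
    {E : Set (Set (Eucl n))} (hE : E ⊆ D) :
    fracIntGrid n α E f x =
      ∑' k : ℤ, (if Qx hD k x ∈ E then
        volume (Qx hD k x) ^ (α / (n:ℝ)) * avgE f (Qx hD k x) else 0) := by
  unfold fracIntGrid
  refine tsum_eq_tsum_of_ne_zero_bij
    (fun k => ⟨Qx hD (k:ℤ) x, by
      have := k.2
      simp only [Function.mem_support, ne_eq, ite_eq_right_iff, not_forall] at this
      exact this.choose⟩) ?_ ?_ ?_
  · intro k k' hkk'
    have : Qx hD (k:ℤ) x = Qx hD (k':ℤ) x := congrArg Subtype.val hkk'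
    exact Subtype.ext (Qx_inj hD hn this)
  · rintro ⟨Q, hQ⟩ hQne
    simp only [Function.mem_support, ne_eq] at hQne
    have hx : x ∈ Q := by
      by_contra hx
      exact hQne (Set.indicator_of_notMem hx _)
    set k := scOf hD (hE hQ) with hk
    have hQk : Q = Qx hD k x := eq_Qx_of_mem hD (hE hQ) hx
    have hgk : (if Qx hD k x ∈ E then
        volume (Qx hD k x) ^ (α / (n:ℝ)) * avgE f (Qx hD k x) else 0) ≠ 0 := by
      rw [← hQk, if_pos hQ]
      rw [Set.indicator_of_mem hx] at hQne
      exact hQne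
    exact ⟨⟨k, by simpa [Function.mem_support] using hgk⟩, Subtype.ext hQk.symm⟩
  · intro k
    have hxk : x ∈ Qx hD (k:ℤ) x := mem_Qx hD _ x
    have := k.2
    simp only [Function.mem_support, ne_eq, ite_eq_right_iff, not_forall] at this
    rw [Set.indicator_of_mem hxk]
    exact (if_pos this.choose).symm

lemma vol_rpow (hn : 0 < n) (α : ℝ) (k : ℤ) :
    (ENNReal.ofReal ((sc k) ^ n)) ^ (α / (n:ℝ)) = ENNReal.ofReal (((2:ℝ) ^ α) ^ k) := by
  have h1 : (0:ℝ) < (sc k) ^ n := pow_pos (sc_pos k) n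
  rw [ENNReal.ofReal_rpow_of_pos h1]
  congr 1
  have h2 : ((sc k) ^ n : ℝ) = (2:ℝ) ^ ((k * n : ℤ) : ℝ) := by
    rw [Real.rpow_intCast]
    rw [zpow_mul]
    norm_num [sc]
  have hn' : (n:ℝ) ≠ 0 := Nat.cast_ne_zero.mpr hn.ne'
  rw [h2, ← Real.rpow_intCast ((2:ℝ) ^ α) k, ← Real.rpow_mul (by norm_num : (0:ℝ) ≤ 2),
    ← Real.rpow_mul (by norm_num : (0:ℝ) ≤ 2)]
  congr 1
  push_cast
  field_simp

end Sp6
end Aux3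
noncomputable section Aux4
open MeasureTheory ENNReal Set
open scoped Classical
namespace Sp6
variable {n : ℕ} {D : Set (Set (Eucl n))}

lemma cube_subset_compact (a : Fin n → ℝ) (h : ℝ) :
    ∃ K : Set (Eucl n), IsCompact K ∧ cube n a h ⊆ K := by
  refine ⟨(PiLp.continuousLinearEquiv 2 ℝ (fun _ : Fin n => ℝ)).symm ''
    (Set.univ.pi fun i => Set.Icc (a i) (a i + h)), ?_, ?_⟩
  · exact (isCompact_univ_pi fun i => isCompact_Icc).image
      (PiLp.continuousLinearEquiv 2 ℝ (fun _ : Fin n => ℝ)).symm.continuous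
  · intro x hx
    exact ⟨fun i => x i, fun i _ => ⟨(hx i).1, (hx i).2.le⟩, rfl⟩

lemma lint_cube_lt_top {f : Eucl n → ℝ} (hf : LocallyIntegrable f volume)
    (a : Fin n → ℝ) (h : ℝ) : ∫⁻ x in cube n a h, ENNReal.ofReal (f x) < ∞ := by
  obtain ⟨K, hK, hsub⟩ := cube_subset_compact a h
  calc ∫⁻ x in cube n a h, ENNReal.ofReal (f x)
      ≤ ∫⁻ x in K, ENNReal.ofReal (f x) := lintegral_mono_set hsub
    _ < ∞ := (hf.integrableOn_isCompact hK).lintegral_lt_top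

lemma avgE_lt_top {f : Eucl n → ℝ} (hf : LocallyIntegrable f volume)
    (hD : IsDyadicGrid n D) {Q : Set (Eucl n)} (hQ : Q ∈ D) : avgE f Q < ∞ := by
  obtain ⟨a, ha⟩ := scOf_spec hD hQ
  have h1 : ∫⁻ x in Q, ENNReal.ofReal (f x) < ∞ := by
    rw [ha]; exact lint_cube_lt_top hf a _
  have h2 : volume Q ≠ 0 := by
    rw [volume_of_mem hD hQ]
    simp [ENNReal.ofReal_eq_zero, not_le, pow_pos (sc_pos _) n]
  exact ENNReal.div_lt_top h1.ne h2

lemma volume_mem_pos (hD : IsDyadicGrid n D) {Q : Set (Eucl n)} (hQ : Q ∈ D) :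
    0 < volume Q := by
  rw [volume_of_mem hD hQ]
  simp [ENNReal.ofReal_pos, pow_pos (sc_pos _) n]

lemma volume_mem_lt_top (hD : IsDyadicGrid n D) {Q : Set (Eucl n)} (hQ : Q ∈ D) :
    volume Q < ∞ := by
  rw [volume_of_mem hD hQ]; exact ENNReal.ofReal_lt_top

/-- decay along the chain at `x`. -/
lemma chain_decay (hD : IsDyadicGrid n D) (hn : 0 < n) {f : Eucl n → ℝ}
    (hdecay : ∀ ε : ℝ, 0 < ε → ∃ M : ℝ, ∀ Q ∈ D, M ≤ (volume Q).toReal →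
      lavg Q (fun y => ENNReal.ofReal (f y)) ≤ ENNReal.ofReal ε)
    (x : Eucl n) {ε : ℝ} (hε : 0 < ε) :
    ∃ K : ℤ, ∀ i : ℤ, K ≤ i → avgE f (Qx hD i x) ≤ ENNReal.ofReal ε := by
  obtain ⟨M, hM⟩ := hdecay ε hε
  obtain ⟨N, hN⟩ := pow_unbounded_of_one_lt M (one_lt_two : (1:ℝ) < 2)
  refine ⟨N, fun i hi => ?_⟩
  refine hM _ (Qx_mem hD i x) ?_
  rw [volume_Qx hD i x, ENNReal.toReal_ofReal (pow_nonneg (sc_pos i).le n)]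
  have h1 : ((2:ℝ) ^ (N:ℤ)) ≤ (2:ℝ) ^ (i * n) := by
    refine zpow_le_zpow_right₀ (one_le_two) ?_
    have hi0 : (0:ℤ) ≤ i := le_trans (Int.ofNat_nonneg N) hi
    calc (N:ℤ) ≤ i := hi
      _ = i * 1 := (mul_one i).symm
      _ ≤ i * n := by
          exact mul_le_mul_of_nonneg_left (by exact_mod_cast hn) hi0
  have h2 : ((sc i) ^ n : ℝ) = (2:ℝ) ^ (i * (n:ℤ)) := by
    rw [zpow_mul]; norm_num [sc]
  rw [h2]
  calc M ≤ 2 ^ N := hN.le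
    _ = (2:ℝ) ^ (N:ℤ) := by norm_num
    _ ≤ (2:ℝ) ^ (i * (n:ℤ)) := h1

/-- maximal element of the chain above threshold -/
lemma chain_max (hD : IsDyadicGrid n D) (hn : 0 < n) {f : Eucl n → ℝ}
    (hdecay : ∀ ε : ℝ, 0 < ε → ∃ M : ℝ, ∀ Q ∈ D, M ≤ (volume Q).toReal →
      lavg Q (fun y => ENNReal.ofReal (f y)) ≤ ENNReal.ofReal ε)
    (x : Eucl n) {lam : ℝ} (hlam : 0 < lam)
    (hex : ∃ i : ℤ, ENNReal.ofReal lam < avgE f (Qx hD i x)) :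
    ∃ m : ℤ, ENNReal.ofReal lam < avgE f (Qx hD m x) ∧
      (∀ i : ℤ, ENNReal.ofReal lam < avgE f (Qx hD i x) → i ≤ m) ∧
      (∀ P ∈ D, Qx hD m x ⊆ P → ENNReal.ofReal lam < avgE f P → P = Qx hD m x) := by
  obtain ⟨K, hK⟩ := chain_decay hD hn hdecay x hlam
  obtain ⟨m, hm, hmax⟩ := Int.exists_greatest_of_bdd (P := fun i =>
      ENNReal.ofReal lam < avgE f (Qx hD i x))
    ⟨K, fun i hi => by
      by_contra hiK
      exact absurd (hK i (le_of_not_ge hiK)) (not_le.mpr hi)⟩ hex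
  refine ⟨m, hm, hmax, fun P hP hsub havg => ?_⟩
  have hxP : x ∈ P := hsub (mem_Qx hD m x)
  have hPQ : P = Qx hD (scOf hD hP) x := eq_Qx_of_mem hD hP hxP
  have h1 : m ≤ scOf hD hP := by
    have := scale_mono hD hn (Qx_mem hD m x) hP hsub
    rwa [scOf_Qx hD hn m x] at this
  have h2 : scOf hD hP ≤ m := hmax _ (by rwa [← hPQ])
  rw [hPQ, le_antisymm h2 h1]

end Sp6
end Aux4
noncomputable section Aux5
open MeasureTheory ENNReal Set
open scoped Classical
namespace Sp6
variable {n : ℕ} {D : Set (Set (Eucl n))}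

lemma geom_sum {r : ℝ} (hr : 1 < r) (m : ℤ) :
    ∑' k : ℤ, (if k ≤ m then ENNReal.ofReal (r ^ k) else 0) =
      ENNReal.ofReal (r ^ m) * (1 - ENNReal.ofReal r⁻¹)⁻¹ := by
  have hr0 : (0:ℝ) < r := lt_trans one_pos hr
  have key : ∑' k : ℤ, (if k ≤ m then ENNReal.ofReal (r ^ k) else 0) =
      ∑' j : ℕ, ENNReal.ofReal r⁻¹ ^ j * ENNReal.ofReal (r ^ m) := by
    refine tsum_eq_tsum_of_ne_zero_bij (fun j => m - (j:ℤ)) ?_ ?_ ?_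
    · intro j j' hj
      simp only at hj
      exact Subtype.ext (Nat.cast_injective (sub_right_injective hj))
    · intro k hk
      simp only [Function.mem_support, ne_eq, ite_eq_right_iff, not_forall] at hk
      obtain ⟨hkm, -⟩ := hk
      refine ⟨⟨(m - k).toNat, ?_⟩, ?_⟩
      · simp only [Function.mem_support, ne_eq]
        refine mul_ne_zero (pow_ne_zero _ ?_) ?_ <;>
          simp [ENNReal.ofReal_eq_zero, not_le, inv_pos.mpr hr0, zpow_pos hr0, hr0]
      · simp only
        omega
    · intro j
      have hjm : m - (j:ℤ) ≤ m := by omega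
      rw [if_pos hjm]
      rw [← ENNReal.ofReal_pow (inv_nonneg.mpr hr0.le), ← ENNReal.ofReal_mul (by positivity)]
      congr 1
      rw [zpow_sub₀ hr0.ne', zpow_natCast, inv_pow]
      ring
  rw [key, ENNReal.tsum_mul_right, ENNReal.tsum_geometric, mul_comm]

lemma lint_eq_avg_mul_vol {f : Eucl n → ℝ} (hD : IsDyadicGrid n D) {Q : Set (Eucl n)}
    (hQ : Q ∈ D) : ∫⁻ x in Q, ENNReal.ofReal (f x) = avgE f Q * volume Q :=
  (ENNReal.div_mul_cancel (volume_mem_pos hD hQ).ne' (volume_mem_lt_top hD hQ).ne).symm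

end Sp6
end Aux5
noncomputable section Aux6
open MeasureTheory ENNReal Set
open scoped Classical
namespace Sp6
variable {n : ℕ} {D : Set (Set (Eucl n))}

/-- the sparse family of maximal cubes over all thresholds `b^j` -/
def Sfam (D : Set (Set (Eucl n))) (f : Eucl n → ℝ) (b : ℝ) : Set (Set (Eucl n)) :=
  {Q | Q ∈ D ∧ ∃ j : ℤ, ENNReal.ofReal (b ^ j) < avgE f Q ∧
    ∀ P ∈ D, Q ⊆ P → ENNReal.ofReal (b ^ j) < avgE f P → P = Q}

lemma Sfam_subset (f : Eucl n → ℝ) (b : ℝ) : Sfam D f b ⊆ D := fun _ hQ => hQ.1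

lemma key_assign (hD : IsDyadicGrid n D) (hn : 0 < n) {f : Eucl n → ℝ}
    (hf : LocallyIntegrable f volume)
    (hdecay : ∀ ε : ℝ, 0 < ε → ∃ M : ℝ, ∀ Q ∈ D, M ≤ (volume Q).toReal →
      lavg Q (fun y => ENNReal.ofReal (f y)) ≤ ENNReal.ofReal ε)
    {b : ℝ} (hb : 1 < b) (x : Eucl n) (k : ℤ) (hk : avgE f (Qx hD k x) ≠ 0) :
    ∃ m : ℤ, k ≤ m ∧ Qx hD m x ∈ Sfam D f b ∧
      avgE f (Qx hD k x) ≤ ENNReal.ofReal b * avgE f (Qx hD m x) := by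
  set A := avgE f (Qx hD k x) with hA
  have hAtop : A < ∞ := avgE_lt_top hf hD (Qx_mem hD k x)
  have ht0 : 0 < A.toReal := ENNReal.toReal_pos hk hAtop.ne
  obtain ⟨j, hj1, hj2⟩ := exists_mem_Ioc_zpow ht0 hb
  have hbj : (0:ℝ) < b ^ j := zpow_pos (lt_trans one_pos hb) j
  have hjA : ENNReal.ofReal (b ^ j) < A := by
    calc ENNReal.ofReal (b ^ j) < ENNReal.ofReal A.toReal :=
          (ENNReal.ofReal_lt_ofReal_iff ht0).mpr hj1
      _ = A := ENNReal.ofReal_toReal hAtop.ne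
  obtain ⟨m, hm1, hm2, hm3⟩ := chain_max hD hn hdecay x hbj ⟨k, hjA⟩
  refine ⟨m, hm2 k hjA, ⟨Qx_mem hD m x, j, hm1, hm3⟩, ?_⟩
  calc A = ENNReal.ofReal A.toReal := (ENNReal.ofReal_toReal hAtop.ne).symm
    _ ≤ ENNReal.ofReal (b ^ (j+1)) := ENNReal.ofReal_le_ofReal hj2
    _ = ENNReal.ofReal b * ENNReal.ofReal (b ^ j) := by
        rw [← ENNReal.ofReal_mul (by linarith)]
        congr 1
        rw [zpow_add₀ (by linarith : b ≠ 0) j 1, zpow_one]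
        ring
    _ ≤ ENNReal.ofReal b * avgE f (Qx hD m x) :=
        mul_le_mul_right hm1.le _

lemma upper_pointwise (hD : IsDyadicGrid n D) (hn : 0 < n) {α : ℝ} (hα0 : 0 < α)
    {f : Eucl n → ℝ} (hf : LocallyIntegrable f volume)
    (hdecay : ∀ ε : ℝ, 0 < ε → ∃ M : ℝ, ∀ Q ∈ D, M ≤ (volume Q).toReal →
      lavg Q (fun y => ENNReal.ofReal (f y)) ≤ ENNReal.ofReal ε)
    {b : ℝ} (hb : 1 < b) (x : Eucl n) :
    ∑' k : ℤ, volume (Qx hD k x) ^ (α / (n:ℝ)) * avgE f (Qx hD k x) ≤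
      (ENNReal.ofReal b * (1 - ENNReal.ofReal ((2:ℝ) ^ α)⁻¹)⁻¹) *
      ∑' k : ℤ, (if Qx hD k x ∈ Sfam D f b then
        volume (Qx hD k x) ^ (α / (n:ℝ)) * avgE f (Qx hD k x) else 0) := by
  set r : ℝ := (2:ℝ) ^ α with hrdef
  have hr1 : 1 < r := by
    rw [hrdef]
    exact (Real.one_lt_rpow_iff_of_pos two_pos).mpr (Or.inl ⟨one_lt_two, hα0⟩)
  set A : ℤ → ℝ≥0∞ := fun k => avgE f (Qx hD k x) with hAdef
  have hT : ∀ k : ℤ, volume (Qx hD k x) ^ (α / (n:ℝ)) = ENNReal.ofReal (r ^ k) := by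
    intro k
    rw [volume_Qx hD k x, vol_rpow hn α k]
  set T : ℤ → ℝ≥0∞ := fun k => ENNReal.ofReal (r ^ k) * A k with hTdef
  have hTeq : ∀ k : ℤ, volume (Qx hD k x) ^ (α / (n:ℝ)) * avgE f (Qx hD k x) = T k := by
    intro k; rw [hT k]
  -- assignment
  set ψ : ℤ → ℤ := fun k =>
    if h : A k ≠ 0 then (key_assign hD hn hf hdecay hb x k h).choose else k with hψdef
  have hψ1 : ∀ k, A k ≠ 0 → k ≤ ψ k ∧ Qx hD (ψ k) x ∈ Sfam D f b ∧
      A k ≤ ENNReal.ofReal b * A (ψ k) := by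
    intro k h
    rw [hψdef]
    simp only [h, dif_pos, ne_eq, not_false_iff]
    exact (key_assign hD hn hf hdecay hb x k h).choose_spec
  have hψ0 : ∀ k, A k = 0 → ψ k = k := by
    intro k h
    rw [hψdef]
    simp [h]
  calc ∑' k : ℤ, volume (Qx hD k x) ^ (α / (n:ℝ)) * avgE f (Qx hD k x)
      = ∑' k : ℤ, T k := by exact tsum_congr hTeq
    _ = ∑' k : ℤ, ∑' m : ℤ, (if ψ k = m then T k else 0) := by
        refine tsum_congr fun k => ?_
        rw [tsum_eq_single (ψ k) (fun m hm => if_neg (Ne.symm hm))]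
        rw [if_pos rfl]
    _ = ∑' m : ℤ, ∑' k : ℤ, (if ψ k = m then T k else 0) := ENNReal.tsum_comm
    _ ≤ ∑' m : ℤ, (ENNReal.ofReal b * (1 - ENNReal.ofReal r⁻¹)⁻¹) *
        (if Qx hD m x ∈ Sfam D f b then T m else 0) := by
        refine ENNReal.tsum_le_tsum fun m => ?_
        by_cases hcase : ∃ k : ℤ, ψ k = m ∧ A k ≠ 0
        · obtain ⟨k₀, hk₀m, hk₀⟩ := hcase
          obtain ⟨-, hSm, -⟩ := hψ1 k₀ hk₀
          rw [hk₀m] at hSm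
          have step1 : ∑' k : ℤ, (if ψ k = m then T k else 0) ≤
              ∑' k : ℤ, (if k ≤ m then ENNReal.ofReal (r ^ k) else 0) *
                (ENNReal.ofReal b * A m) := by
            refine ENNReal.tsum_le_tsum fun k => ?_
            by_cases hkm : ψ k = m
            · rw [if_pos hkm]
              by_cases hk : A k = 0
              · rw [hTdef]
                simp [hk]
              · obtain ⟨hle, -, hbound⟩ := hψ1 k hk
                rw [hkm] at hle hbound
                rw [if_pos hle, hTdef]
                exact mul_le_mul_right hbound _
            · rw [if_neg hkm]
              exact zero_le
          have step2 : ∑' k : ℤ, (if k ≤ m then ENNReal.ofReal (r ^ k) else 0) *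
              (ENNReal.ofReal b * A m) =
              (ENNReal.ofReal b * (1 - ENNReal.ofReal r⁻¹)⁻¹) * T m := by
            rw [ENNReal.tsum_mul_right, geom_sum hr1 m, hTdef]
            ring
          rw [if_pos hSm]
          exact step1.trans (le_of_eq step2)
        · push_neg at hcase
          have hz : ∀ k : ℤ, (if ψ k = m then T k else 0) = 0 := by
            intro k
            by_cases hkm : ψ k = m
            · rw [if_pos hkm, hTdef]
              simp [hcase k hkm]
            · rw [if_neg hkm]
          calc ∑' k : ℤ, (if ψ k = m then T k else 0) = 0 := by simp [hz]
            _ ≤ _ := zero_le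
    _ = (ENNReal.ofReal b * (1 - ENNReal.ofReal r⁻¹)⁻¹) *
        ∑' m : ℤ, (if Qx hD m x ∈ Sfam D f b then T m else 0) := ENNReal.tsum_mul_left
    _ = (ENNReal.ofReal b * (1 - ENNReal.ofReal ((2:ℝ) ^ α)⁻¹)⁻¹) *
        ∑' k : ℤ, (if Qx hD k x ∈ Sfam D f b then
          volume (Qx hD k x) ^ (α / (n:ℝ)) * avgE f (Qx hD k x) else 0) := by
        rw [← hrdef]
        congr 1
        exact tsum_congr fun k => by rw [hTeq k]

end Sp6
end Aux6
noncomputable section Aux7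
open MeasureTheory ENNReal Set
open scoped Classical
namespace Sp6
variable {n : ℕ} {D : Set (Set (Eucl n))}

lemma mem_rat_point {Q : Set (Eucl n)} (hD : IsDyadicGrid n D) (hQ : Q ∈ D) :
    ∃ q : Fin n → ℚ, (show Eucl n from WithLp.toLp 2 (fun i => (q i : ℝ))) ∈ Q := by
  obtain ⟨a, ha⟩ := scOf_spec hD hQ
  have hpos := sc_pos (scOf hD hQ)
  have hq : ∀ i : Fin n, ∃ q : ℚ, a i < (q:ℝ) ∧ (q:ℝ) < a i + sc (scOf hD hQ) :=
    fun i => exists_rat_btwn (by linarith)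
  choose q hq1 hq2 using hq
  exact ⟨q, by rw [ha]; exact fun i => ⟨(hq1 i).le, hq2 i⟩⟩

lemma countable_of_disjoint_subfamily (hD : IsDyadicGrid n D) {F : Set (Set (Eucl n))}
    (hF : F ⊆ D) (hdisj : ∀ T₁ ∈ F, ∀ T₂ ∈ F, T₁ ≠ T₂ → Disjoint T₁ T₂) :
    F.Countable := by
  rw [← Set.countable_coe_iff]
  have hpt : ∀ T : F, ∃ q : Fin n → ℚ,
      (show Eucl n from WithLp.toLp 2 (fun i => (q i : ℝ))) ∈ (T : Set (Eucl n)) :=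
    fun T => mem_rat_point hD (hF T.2)
  choose q hq using hpt
  refine Countable.of_equiv _ (Equiv.ofInjective q ?_).symm
  intro T₁ T₂ h
  by_contra hne
  have hne' : (T₁ : Set (Eucl n)) ≠ T₂ := fun hh => hne (Subtype.ext hh)
  have hdis := hdisj T₁ T₁.2 T₂ T₂.2 hne'
  rw [Set.disjoint_iff] at hdis
  have hmem := hq T₁
  rw [h] at hmem
  exact hdis ⟨hmem, hq T₂⟩

lemma measurableSet_of_mem (hD : IsDyadicGrid n D) {Q : Set (Eucl n)} (hQ : Q ∈ D) :
    MeasurableSet Q := by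
  obtain ⟨a, ha⟩ := scOf_spec hD hQ
  rw [ha]; exact measurableSet_cube a _

lemma Sfam_isSparse (hD : IsDyadicGrid n D) (hn : 0 < n) {f : Eucl n → ℝ}
    (hf : LocallyIntegrable f volume)
    (hdecay : ∀ ε : ℝ, 0 < ε → ∃ M : ℝ, ∀ Q ∈ D, M ≤ (volume Q).toReal →
      lavg Q (fun y => ENNReal.ofReal (f y)) ≤ ENNReal.ofReal ε) :
    IsSparse (Sfam D f ((2:ℝ) ^ (n+1))) := by
  set b : ℝ := (2:ℝ) ^ (n+1) with hbdef
  have hb1 : 1 < b := one_lt_pow₀ (one_lt_two : (1:ℝ) < 2) (Nat.succ_ne_zero n)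
  have hb0 : (0:ℝ) < b := lt_trans one_pos hb1
  intro P hP
  obtain ⟨hPD, k₀, hk₀, hmax₀⟩ := hP
  have hPavg_pos : (0:ℝ≥0∞) < avgE f P := lt_of_le_of_lt (zero_le) hk₀
  have hPavg_top : avgE f P < ∞ := avgE_lt_top hf hD hPD
  set t : ℝ := (avgE f P).toReal with htdef
  have ht0 : 0 < t := ENNReal.toReal_pos hPavg_pos.ne' hPavg_top.ne
  have htavg : avgE f P = ENNReal.ofReal t := (ENNReal.ofReal_toReal hPavg_top.ne).symm
  obtain ⟨k, hk1, hk2⟩ := exists_mem_Ioc_zpow ht0 hb1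
  have hbk : (0:ℝ) < b ^ k := zpow_pos hb0 k
  have hbk1 : (0:ℝ) < b ^ (k+1) := zpow_pos hb0 (k+1)
  have havgk : ENNReal.ofReal (b ^ k) < avgE f P := by
    rw [htavg]; exact (ENNReal.ofReal_lt_ofReal_iff ht0).mpr hk1
  have havgk1 : avgE f P ≤ ENNReal.ofReal (b ^ (k+1)) := by
    rw [htavg]; exact ENNReal.ofReal_le_ofReal hk2
  have hk₀k : k₀ ≤ k := by
    have h2 : b ^ k₀ < b ^ (k+1) :=
      (ENNReal.ofReal_lt_ofReal_iff hbk1).mp (lt_of_lt_of_le hk₀ havgk1)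
    have := (zpow_lt_zpow_iff_right₀ hb1).mp h2
    omega
  have hmaxk : ∀ P' ∈ D, P ⊆ P' → ENNReal.ofReal (b ^ k) < avgE f P' → P' = P := by
    intro P' hP' hsub havg'
    refine hmax₀ P' hP' hsub (lt_of_le_of_lt ?_ havg')
    exact ENNReal.ofReal_le_ofReal (zpow_le_zpow_right₀ hb1.le hk₀k)
  -- parent cube
  obtain ⟨aP, haP⟩ := scOf_spec hD hPD
  obtain ⟨x₀, hx₀⟩ : ∃ x₀, x₀ ∈ P := by
    rw [haP]; exact cube_nonempty _ (sc_pos _)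
  set s := scOf hD hPD with hsdef
  have hPQx : P = Qx hD s x₀ := eq_Qx_of_mem hD hPD hx₀
  set Phat := Qx hD (s+1) x₀ with hPhatdef
  have hsubhat : P ⊆ Phat := by
    rw [hPQx]; exact Qx_nested hD hn (by omega) x₀
  have hnehat : Phat ≠ P := by
    intro h
    have : s + 1 = s := Qx_inj hD hn (by rw [← hPhatdef, h, hPQx])
    omega
  have havghat : avgE f Phat ≤ ENNReal.ofReal (b ^ k) := by
    by_contra hcon
    exact hnehat (hmaxk Phat (Qx_mem hD (s+1) x₀) hsubhat (lt_of_not_ge hcon))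
  have hinthat : ∫⁻ y in P, ENNReal.ofReal (f y) ≤
      ENNReal.ofReal (b ^ k) * (ENNReal.ofReal ((2:ℝ)^n) * volume P) := by
    calc ∫⁻ y in P, ENNReal.ofReal (f y)
        ≤ ∫⁻ y in Phat, ENNReal.ofReal (f y) := lintegral_mono_set hsubhat
      _ = avgE f Phat * volume Phat := lint_eq_avg_mul_vol hD (Qx_mem hD (s+1) x₀)
      _ ≤ ENNReal.ofReal (b ^ k) * volume Phat := mul_le_mul_left havghat _
      _ = ENNReal.ofReal (b ^ k) * (ENNReal.ofReal ((2:ℝ)^n) * volume P) := by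
          rw [hPhatdef, volume_Qx hD (s+1) x₀, hPQx, volume_Qx hD s x₀,
            ← ENNReal.ofReal_mul (by positivity : (0:ℝ) ≤ (2:ℝ)^n)]
          congr 2
          show (sc (s+1)) ^ n = (2:ℝ)^n * (sc s) ^ n
          rw [show sc (s+1) = 2 * sc s by
            rw [sc, sc, zpow_add₀ (two_ne_zero) s 1, zpow_one]; ring]
          rw [mul_pow]
  -- the maximal subcubes at level k+1
  set lam1 : ℝ≥0∞ := ENNReal.ofReal (b ^ (k+1)) with hlam1def
  set Max : Set (Set (Eucl n)) := {T | T ∈ D ∧ T ⊆ P ∧ lam1 < avgE f T ∧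
    ∀ P' ∈ D, T ⊆ P' → lam1 < avgE f P' → P' = T} with hMaxdef
  have hMaxD : Max ⊆ D := fun T hT => hT.1
  have hMaxdisj : ∀ T₁ ∈ Max, ∀ T₂ ∈ Max, T₁ ≠ T₂ → Disjoint T₁ T₂ := by
    intro T₁ h₁ T₂ h₂ hne12
    rw [Set.disjoint_iff_inter_eq_empty]
    by_contra hcon
    rcases grid_nested hD h₁.1 h₂.1 (Set.nonempty_iff_ne_empty.mpr hcon) with hsub | hsub
    · exact hne12 (h₁.2.2.2 T₂ h₂.1 hsub h₂.2.2.1).symm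
    · exact hne12 (h₂.2.2.2 T₁ h₁.1 hsub h₁.2.2.1)
  have hcover : ∀ R, R ∈ Sfam D f b → R ⊂ P → R ⊆ ⋃₀ Max := by
    rintro R ⟨hRD, i, hi, hmaxR⟩ hRP
    have hPi : avgE f P ≤ ENNReal.ofReal (b ^ i) := by
      by_contra hcon
      exact hRP.ne' (hmaxR P hPD hRP.subset (lt_of_not_ge hcon))
    have hk1i : k + 1 ≤ i := by
      have h2 : b ^ k < b ^ i := (ENNReal.ofReal_lt_ofReal_iff (zpow_pos hb0 i)).mp
        (lt_of_lt_of_le havgk hPi)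
      have := (zpow_lt_zpow_iff_right₀ hb1).mp h2
      omega
    have hRavg : lam1 < avgE f R :=
      lt_of_le_of_lt (ENNReal.ofReal_le_ofReal (zpow_le_zpow_right₀ hb1.le hk1i)) hi
    intro y hy
    have hRQx : R = Qx hD (scOf hD hRD) y := eq_Qx_of_mem hD hRD hy
    obtain ⟨m, hm1, hm2, hm3⟩ := chain_max hD hn hdecay y hbk1
      ⟨scOf hD hRD, by rw [← hRQx]; exact hRavg⟩
    set T := Qx hD m y with hTdef
    have hTD : T ∈ D := Qx_mem hD m y
    have hyT : y ∈ T := mem_Qx hD m y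
    have hTP : T ⊆ P := by
      rcases grid_nested hD hTD hPD ⟨y, hyT, hRP.subset hy⟩ with h | h
      · exact h
      · exfalso
        have hTavg : ENNReal.ofReal (b ^ k) < avgE f T := by
          refine lt_trans ?_ hm1
          exact (ENNReal.ofReal_lt_ofReal_iff hbk1).mpr
            ((zpow_lt_zpow_iff_right₀ hb1).mpr (lt_add_one k))
        have hTeqP := hmaxk T hTD h hTavg
        rw [hTeqP] at hm1
        exact absurd hm1 (not_lt.mpr havgk1)
    exact ⟨T, ⟨hTD, hTP, hm1, hm3⟩, hyT⟩
  have hMaxcount : Max.Countable := countable_of_disjoint_subfamily hD hMaxD hMaxdisj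
  haveI := hMaxcount.to_subtype
  have hlam0 : lam1 ≠ 0 := by
    rw [hlam1def]; simp [ENNReal.ofReal_eq_zero, not_le, hbk1]
  have hlamtop : lam1 ≠ ∞ := by rw [hlam1def]; exact ENNReal.ofReal_ne_top
  set W := ⋃₀ Max with hWdef
  have hWsub : W ⊆ P := by
    intro y hy
    obtain ⟨T, hT, hyT⟩ := hy
    exact hT.2.1 hyT
  have hWvol : volume W ≤ ENNReal.ofReal (1/2) * volume P := by
    have h1 : volume W ≤ ∑' T : Max, volume (T : Set (Eucl n)) := by
      rw [hWdef, Set.sUnion_eq_iUnion]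
      exact measure_iUnion_le _
    have h2 : ∀ T : ↥Max, volume (T : Set (Eucl n)) ≤
        lam1⁻¹ * ∫⁻ y in (T : Set (Eucl n)), ENNReal.ofReal (f y) := by
      intro T
      have havgT : lam1 < avgE f (T : Set (Eucl n)) := T.2.2.2.1
      have hstep : lam1 * volume (T : Set (Eucl n)) ≤
          ∫⁻ y in (T : Set (Eucl n)), ENNReal.ofReal (f y) :=
        ENNReal.mul_le_of_le_div havgT.le
      calc volume (T : Set (Eucl n))
          = lam1⁻¹ * (lam1 * volume (T : Set (Eucl n))) := by
            rw [← mul_assoc, ENNReal.inv_mul_cancel hlam0 hlamtop, one_mul]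
        _ ≤ lam1⁻¹ * ∫⁻ y in (T : Set (Eucl n)), ENNReal.ofReal (f y) :=
            mul_le_mul_right hstep _
    have h3 : ∑' T : ↥Max, ∫⁻ y in (T : Set (Eucl n)), ENNReal.ofReal (f y) =
        ∫⁻ y in ⋃ T : ↥Max, (T : Set (Eucl n)), ENNReal.ofReal (f y) := by
      refine (lintegral_iUnion (fun T => measurableSet_of_mem hD T.2.1) ?_ _).symm
      intro T₁ T₂ hne
      exact hMaxdisj T₁ T₁.2 T₂ T₂.2 (fun hh => hne (Subtype.ext hh))
    have h4 : (⋃ T : ↥Max, (T : Set (Eucl n))) = W := (Set.sUnion_eq_iUnion).symm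
    calc volume W ≤ ∑' T : ↥Max, volume (T : Set (Eucl n)) := h1
      _ ≤ ∑' T : ↥Max, lam1⁻¹ * ∫⁻ y in (T : Set (Eucl n)), ENNReal.ofReal (f y) :=
          ENNReal.tsum_le_tsum h2
      _ = lam1⁻¹ * ∑' T : ↥Max, ∫⁻ y in (T : Set (Eucl n)), ENNReal.ofReal (f y) :=
          ENNReal.tsum_mul_left
      _ = lam1⁻¹ * ∫⁻ y in W, ENNReal.ofReal (f y) := by rw [h3, h4]
      _ ≤ lam1⁻¹ * ∫⁻ y in P, ENNReal.ofReal (f y) :=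
          mul_le_mul_right (lintegral_mono_set hWsub) _
      _ ≤ lam1⁻¹ * (ENNReal.ofReal (b ^ k) * (ENNReal.ofReal ((2:ℝ)^n) * volume P)) :=
          mul_le_mul_right hinthat _
      _ = ENNReal.ofReal (1/2) * volume P := by
          have hreal : ((b:ℝ) ^ (k+1))⁻¹ * (b ^ k * (2:ℝ)^n) = 1/2 := by
            have hbne : b ≠ 0 := hb0.ne'
            rw [zpow_add₀ hbne k 1, zpow_one, hbdef, pow_succ]
            have hbkne : ((2:ℝ) ^ (n+1) : ℝ) ^ k ≠ 0 := (zpow_pos (by positivity) k).ne'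
            field_simp
          rw [hlam1def, ← ENNReal.ofReal_inv_of_pos hbk1, ← mul_assoc, ← mul_assoc,
            ← ENNReal.ofReal_mul (by positivity : (0:ℝ) ≤ (b ^ (k+1))⁻¹),
            ← ENNReal.ofReal_mul (by positivity : (0:ℝ) ≤ (b ^ (k+1))⁻¹ * b ^ k)]
          congr 1
          rw [mul_assoc, hreal]
  -- conclude sparseness
  have hU : (⋃ R ∈ {R | R ∈ Sfam D f b ∧ R ⊂ P}, R) ⊆ W := by
    intro y hy
    simp only [Set.mem_iUnion] at hy
    obtain ⟨R, ⟨hR1, hR2⟩, hyR⟩ := hy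
    exact hcover R hR1 hR2 hyR
  have hhalf : ENNReal.ofReal (1/2) * volume P = volume P / 2 := by
    rw [show ENNReal.ofReal (1/2) = (2:ℝ≥0∞)⁻¹ by
      rw [one_div, ENNReal.ofReal_inv_of_pos two_pos]; norm_num]
    rw [ENNReal.div_eq_inv_mul]
  have hdiff : volume P / 2 ≤ volume (sparseE (Sfam D f b) P) := by
    have hPW : volume P ≤ volume (P ∩ W) + volume (P \ W) :=
      measure_le_inter_add_diff _ _ _
    have hPW2 : volume (P ∩ W) ≤ volume P / 2 := by
      refine le_trans (measure_mono Set.inter_subset_right) ?_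
      rw [← hhalf]; exact hWvol
    have hfin : volume P / 2 ≠ ∞ :=
      (ENNReal.div_lt_top (volume_mem_lt_top hD hPD).ne (two_ne_zero)).ne
    have h5 : volume P / 2 ≤ volume (P \ W) := by
      have hchain : volume P / 2 + volume P / 2 ≤ volume P / 2 + volume (P \ W) := by
        calc volume P / 2 + volume P / 2 = volume P := ENNReal.add_halves _
          _ ≤ volume (P ∩ W) + volume (P \ W) := hPW
          _ ≤ volume P / 2 + volume (P \ W) := add_le_add hPW2 le_rfl
      exact (ENNReal.add_le_add_iff_left hfin).mp hchain
    refine le_trans h5 (measure_mono ?_)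
    intro y hy
    exact ⟨hy.1, fun hc => hy.2 (hU hc)⟩
  calc volume P = 2 * (volume P / 2) :=
        (ENNReal.mul_div_cancel (two_ne_zero) (ENNReal.ofNat_ne_top)).symm
    _ ≤ 2 * volume (sparseE (Sfam D f b) P) := mul_le_mul_right hdiff _

end Sp6
end Aux7
/-- sparse domination of the dyadic fractional integral. -/
theorem statement6 (n : ℕ) (hn : 0 < n) (α : ℝ) (hα0 : 0 < α) (hαn : α < n)
    (D : Set (Set (Eucl n))) (hD : IsDyadicGrid n D) :
    ∃ C : ℝ≥0, 0 < C ∧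
      ∀ f : Eucl n → ℝ, LocallyIntegrable f volume → (∀ y, 0 ≤ f y) →
        (∀ ε : ℝ, 0 < ε → ∃ M : ℝ, ∀ Q ∈ D, M ≤ (volume Q).toReal →
          lavg Q (fun y => ENNReal.ofReal (f y)) ≤ ENNReal.ofReal ε) →
        ∃ S ⊆ D, IsSparse S ∧ ∀ x : Eucl n,
          fracIntGrid n α S f x ≤ fracIntGrid n α D f x ∧
          fracIntGrid n α D f x ≤ (C : ℝ≥0∞) * fracIntGrid n α S f x := by
  classical
  set b : ℝ := (2:ℝ) ^ (n+1) with hbdef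
  have hb1 : 1 < b := one_lt_pow₀ (one_lt_two : (1:ℝ) < 2) (Nat.succ_ne_zero n)
  have hb0 : (0:ℝ) < b := lt_trans one_pos hb1
  have hr1 : 1 < (2:ℝ) ^ α :=
    (Real.one_lt_rpow_iff_of_pos two_pos).mpr (Or.inl ⟨one_lt_two, hα0⟩)
  set ρ : ℝ≥0∞ := ENNReal.ofReal ((2:ℝ) ^ α)⁻¹ with hρdef
  have hρlt : ρ < 1 := by
    rw [hρdef, ← ENNReal.ofReal_one]
    exact (ENNReal.ofReal_lt_ofReal_iff one_pos).mpr (inv_lt_one_of_one_lt₀ hr1)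
  set c : ℝ≥0∞ := ENNReal.ofReal b * (1 - ρ)⁻¹ with hcdef
  have hsub_ne : (1:ℝ≥0∞) - ρ ≠ 0 := by
    rw [Ne, tsub_eq_zero_iff_le]
    exact not_le.mpr hρlt
  have hsub_ne_top : (1:ℝ≥0∞) - ρ ≠ ∞ :=
    (lt_of_le_of_lt tsub_le_self ENNReal.one_lt_top).ne
  have hc_ne_top : c ≠ ∞ :=
    ENNReal.mul_ne_top ENNReal.ofReal_ne_top (by rw [Ne, ENNReal.inv_eq_top]; exact hsub_ne)
  have hc_pos : 0 < c := by
    refine ENNReal.mul_pos ?_ ?_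
    · simp [ENNReal.ofReal_eq_zero, not_le, hb0]
    · rw [Ne, ENNReal.inv_eq_zero]
      exact hsub_ne_top
  refine ⟨c.toNNReal, ENNReal.toNNReal_pos hc_pos.ne' hc_ne_top, ?_⟩
  intro f hf hf0 hdecay
  refine ⟨Sp6.Sfam D f b, Sp6.Sfam_subset f b, Sp6.Sfam_isSparse hD hn hf hdecay, ?_⟩
  intro x
  have hrepD := Sp6.rep_lemma hD hn α f x (subset_refl D)
  have hrepS := Sp6.rep_lemma hD hn α f x (Sp6.Sfam_subset f b)
  constructor
  · rw [hrepD, hrepS]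
    refine ENNReal.tsum_le_tsum fun k => ?_
    by_cases hk : Sp6.Qx hD k x ∈ Sp6.Sfam D f b
    · rw [if_pos hk, if_pos (Sp6.Sfam_subset f b hk)]
    · rw [if_neg hk]
      exact zero_le
  · rw [hrepD, hrepS]
    have hupper := Sp6.upper_pointwise hD hn hα0 hf hdecay hb1 x
    have hDall : ∀ k : ℤ, (if Sp6.Qx hD k x ∈ D then
        volume (Sp6.Qx hD k x) ^ (α/(n:ℝ)) * Sp6.avgE f (Sp6.Qx hD k x) else 0) =
        volume (Sp6.Qx hD k x) ^ (α/(n:ℝ)) * Sp6.avgE f (Sp6.Qx hD k x) :=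
      fun k => if_pos (Sp6.Qx_mem hD k x)
    rw [tsum_congr hDall]
    refine le_trans hupper ?_
    rw [ENNReal.coe_toNNReal hc_ne_top]
end
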